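/- arXiv:2604.22807 — 3 statements merged into one kernel-verified Lean document; each statement's English description precedes it below -/
import Mathlib

section
/- Let n ≥ 1 and let σ denote the uniform probability measure on the unit sphere S^{n−1} = {θ ∈ ℝⁿ : ‖θ‖ = 1} (normalized rotation-invariant surface measure). Let Σ be a symmetric positive definite n×n real matrix and Σ_f a symmetric positive semidefinite n×n real matrix. If ∫_{S^{n−1}} sqrt((θᵀ Σ_f θ)/(θᵀ Σ θ)) θ θᵀ σ(dθ) = (1/n) I_n (as an identity of n×n matrices, entrywise integrals), then Σ = Σ_f. -/
open MeasureTheory Metric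
open scoped Pointwise Matrix

/-- The uniform (normalized rotation-invariant) probability measure on the unit sphere
`S^{n-1} ⊆ ℝⁿ`. -/
noncomputable def sphereUniform (n : ℕ) :
    Measure (sphere (0 : EuclideanSpace ℝ (Fin n)) 1) :=
  ((volume : Measure (EuclideanSpace ℝ (Fin n))).toSphere Set.univ)⁻¹ •
    (volume : Measure (EuclideanSpace ℝ (Fin n))).toSphere

/-- The quadratic form `θᵀ A θ` for a direction `θ` on the unit sphere. -/
noncomputable def squad {n : ℕ} (A : Matrix (Fin n) (Fin n) ℝ)
    (θ : sphere (0 : EuclideanSpace ℝ (Fin n)) 1) : ℝ :=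
  ∑ i, ∑ j, (θ : EuclideanSpace ℝ (Fin n)) i * A i j * (θ : EuclideanSpace ℝ (Fin n)) j

namespace SlicedAux

variable {n : ℕ}

/-- The map induced on the unit sphere by a linear isometry. -/
noncomputable def sMap (T : EuclideanSpace ℝ (Fin n) ≃ₗᵢ[ℝ] EuclideanSpace ℝ (Fin n))
    (θ : sphere (0 : EuclideanSpace ℝ (Fin n)) 1) : sphere (0 : EuclideanSpace ℝ (Fin n)) 1 :=
  ⟨T θ, by
    rw [mem_sphere_zero_iff_norm, T.norm_map]
    exact mem_sphere_zero_iff_norm.1 θ.2⟩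

lemma continuous_sMap (T : EuclideanSpace ℝ (Fin n) ≃ₗᵢ[ℝ] EuclideanSpace ℝ (Fin n)) :
    Continuous (sMap T) :=
  Continuous.subtype_mk (T.continuous.comp continuous_subtype_val) _

lemma map_toSphere (T : EuclideanSpace ℝ (Fin n) ≃ₗᵢ[ℝ] EuclideanSpace ℝ (Fin n)) :
    Measure.map (sMap T) (volume : Measure (EuclideanSpace ℝ (Fin n))).toSphere
      = (volume : Measure (EuclideanSpace ℝ (Fin n))).toSphere := by
  ext s hs
  rw [Measure.map_apply (continuous_sMap T).measurable hs,
    Measure.toSphere_apply' _ hs, Measure.toSphere_apply' _ ((continuous_sMap T).measurable hs)]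
  congr 1
  have h1 : (Subtype.val '' (sMap T ⁻¹' s) : Set (EuclideanSpace ℝ (Fin n)))
      = T ⁻¹' (Subtype.val '' s) := by
    ext x
    constructor
    · rintro ⟨θ, hθ, rfl⟩
      exact ⟨sMap T θ, hθ, rfl⟩
    · rintro ⟨θ, hθ, hx⟩
      have hx1 : ‖x‖ = 1 := by
        have h2 : ‖T x‖ = 1 := by rw [← hx]; exact mem_sphere_zero_iff_norm.1 θ.2
        rwa [T.norm_map] at h2
      refine ⟨⟨x, mem_sphere_zero_iff_norm.2 hx1⟩, ?_, rfl⟩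
      have h3 : sMap T ⟨x, mem_sphere_zero_iff_norm.2 hx1⟩ = θ := Subtype.ext hx.symm
      rw [Set.mem_preimage, h3]; exact hθ
  rw [h1]
  have h2 : Set.Ioo (0:ℝ) 1 • (T ⁻¹' (Subtype.val '' s))
      = T ⁻¹' (Set.Ioo (0:ℝ) 1 • (Subtype.val '' s)) := by
    ext z
    simp only [Set.mem_smul, Set.mem_preimage]
    constructor
    · rintro ⟨r, hr, x, hx, rfl⟩
      exact ⟨r, hr, T x, hx, (T.map_smul r x).symm⟩
    · rintro ⟨r, hr, y, hy, hz⟩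
      refine ⟨r, hr, T.symm y, by simpa using hy, ?_⟩
      apply T.injective
      rw [T.map_smul]
      simpa using hz
  rw [h2]
  exact T.measurePreserving.measure_preimage_emb T.toHomeomorph.measurableEmbedding _

lemma map_sphereUniform (T : EuclideanSpace ℝ (Fin n) ≃ₗᵢ[ℝ] EuclideanSpace ℝ (Fin n)) :
    Measure.map (sMap T) (sphereUniform n) = sphereUniform n := by
  rw [sphereUniform, Measure.map_smul, map_toSphere]

lemma integral_sMap (T : EuclideanSpace ℝ (Fin n) ≃ₗᵢ[ℝ] EuclideanSpace ℝ (Fin n))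
    (g : sphere (0 : EuclideanSpace ℝ (Fin n)) 1 → ℝ) (hg : Continuous g) :
    ∫ θ, g (sMap T θ) ∂(sphereUniform n) = ∫ θ, g θ ∂(sphereUniform n) := by
  have h := integral_map (μ := sphereUniform n) (φ := sMap T)
    (continuous_sMap T).measurable.aemeasurable (f := g)
    (by rw [map_sphereUniform]; exact hg.aestronglyMeasurable)
  rw [← h, map_sphereUniform]

lemma contCoord (i : Fin n) :
    Continuous fun θ : sphere (0 : EuclideanSpace ℝ (Fin n)) 1 =>
      (θ : EuclideanSpace ℝ (Fin n)) i :=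
  (EuclideanSpace.proj (𝕜 := ℝ) i).continuous.comp continuous_subtype_val

lemma contSquad (A : Matrix (Fin n) (Fin n) ℝ) :
    Continuous fun θ : sphere (0 : EuclideanSpace ℝ (Fin n)) 1 => squad A θ := by
  unfold squad
  exact continuous_finset_sum _ fun i _ => continuous_finset_sum _ fun j _ =>
    ((contCoord i).mul continuous_const).mul (contCoord j)

lemma squad_eq_dot (A : Matrix (Fin n) (Fin n) ℝ)
    (θ : sphere (0 : EuclideanSpace ℝ (Fin n)) 1) :
    squad A θ = dotProduct (fun i => (θ : EuclideanSpace ℝ (Fin n)) i)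
      (A *ᵥ fun i => (θ : EuclideanSpace ℝ (Fin n)) i) := by
  simp [squad, dotProduct, Matrix.mulVec, Finset.mul_sum, mul_assoc]

lemma coe_ne_zero (θ : sphere (0 : EuclideanSpace ℝ (Fin n)) 1) :
    (θ : EuclideanSpace ℝ (Fin n)) ≠ 0 := by
  intro h0
  have h1 : ‖(θ : EuclideanSpace ℝ (Fin n))‖ = 1 := mem_sphere_zero_iff_norm.1 θ.2
  rw [h0] at h1
  simp at h1

lemma squad_pos {S : Matrix (Fin n) (Fin n) ℝ} (hS : S.PosDef)
    (θ : sphere (0 : EuclideanSpace ℝ (Fin n)) 1) : 0 < squad S θ := by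
  rw [squad_eq_dot]
  have := hS.dotProduct_mulVec_pos (x := fun i => (θ : EuclideanSpace ℝ (Fin n)) i)
    (fun h0 => coe_ne_zero θ (by ext i; exact congrFun h0 i))
  simpa using this

lemma squad_nonneg {S : Matrix (Fin n) (Fin n) ℝ} (hS : S.PosSemidef)
    (θ : sphere (0 : EuclideanSpace ℝ (Fin n)) 1) : 0 ≤ squad S θ := by
  rw [squad_eq_dot]
  have := hS.dotProduct_mulVec_nonneg (fun i => (θ : EuclideanSpace ℝ (Fin n)) i)
  simpa using this

lemma toSphere_univ_ne_top :
    (volume : Measure (EuclideanSpace ℝ (Fin n))).toSphere Set.univ ≠ ⊤ :=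
  measure_ne_top _ _

lemma toSphere_univ_ne_zero (hn : 1 ≤ n) :
    (volume : Measure (EuclideanSpace ℝ (Fin n))).toSphere Set.univ ≠ 0 := by
  rw [Measure.toSphere_apply_univ, finrank_euclideanSpace_fin]
  refine mul_ne_zero ?_ ?_
  · simp; omega
  · exact (measure_ball_pos volume 0 one_pos).ne'

lemma isProb (hn : 1 ≤ n) : IsProbabilityMeasure (sphereUniform n) := by
  constructor
  rw [sphereUniform, Measure.smul_apply, smul_eq_mul,
    ENNReal.inv_mul_cancel (toSphere_univ_ne_zero hn) toSphere_univ_ne_top]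

lemma isOpenPos (hn : 1 ≤ n) : (sphereUniform n).IsOpenPosMeasure := by
  constructor
  intro U hU hne
  rw [sphereUniform, Measure.smul_apply, smul_eq_mul]
  refine mul_ne_zero (ENNReal.inv_ne_zero.2 toSphere_univ_ne_top) ?_
  rw [Measure.toSphere_apply' _ hU.measurableSet, finrank_euclideanSpace_fin]
  refine mul_ne_zero (by simp; omega) ?_
  rw [← Measure.toSphere_apply_aux volume U ⟨1, Set.mem_Ioi.2 one_pos⟩]
  have hopen : IsOpen (Subtype.val ''
      ((homeomorphUnitSphereProd (EuclideanSpace ℝ (Fin n))) ⁻¹'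
        (U ×ˢ Set.Iio (⟨1, Set.mem_Ioi.2 one_pos⟩ : Set.Ioi (0:ℝ))))) := by
    apply (isOpen_compl_singleton).isOpenMap_subtype_val
    apply (homeomorphUnitSphereProd (EuclideanSpace ℝ (Fin n))).continuous.isOpen_preimage
    refine hU.prod ?_
    have h1 : (Set.Iio (⟨1, Set.mem_Ioi.2 one_pos⟩ : Set.Ioi (0:ℝ)))
        = Subtype.val ⁻¹' (Set.Iio (1:ℝ)) := by
      ext r
      exact Iff.rfl
    rw [h1]
    exact isOpen_Iio.preimage continuous_subtype_val
  have hnonempty : (Subtype.val ''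
      ((homeomorphUnitSphereProd (EuclideanSpace ℝ (Fin n))) ⁻¹'
        (U ×ˢ Set.Iio (⟨1, Set.mem_Ioi.2 one_pos⟩ : Set.Ioi (0:ℝ))))).Nonempty := by
    obtain ⟨θ0, hθ0⟩ := hne
    refine ⟨_, ⟨(homeomorphUnitSphereProd (EuclideanSpace ℝ (Fin n))).symm
      (θ0, ⟨(1:ℝ)/2, by norm_num⟩), ?_, rfl⟩⟩
    rw [Set.mem_preimage, Homeomorph.apply_symm_apply]
    refine ⟨hθ0, ?_⟩
    simp only [Set.mem_Iio]
    rw [← Subtype.coe_lt_coe]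
    norm_num
  exact (hopen.measure_pos volume hnonempty).ne'

lemma integrable_cont (hn : 1 ≤ n)
    {g : sphere (0 : EuclideanSpace ℝ (Fin n)) 1 → ℝ} (hg : Continuous g) :
    Integrable g (sphereUniform n) := by
  haveI := isProb hn
  exact hg.integrable_of_hasCompactSupport (isClosed_tsupport _).isCompact

lemma sum_sq_coord (θ : sphere (0 : EuclideanSpace ℝ (Fin n)) 1) :
    ∑ k, (θ : EuclideanSpace ℝ (Fin n)) k * (θ : EuclideanSpace ℝ (Fin n)) k = 1 := by
  have h1 : ‖(θ : EuclideanSpace ℝ (Fin n))‖ = 1 := mem_sphere_zero_iff_norm.1 θ.2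
  have h2 := EuclideanSpace.norm_eq (θ : EuclideanSpace ℝ (Fin n))
  rw [h1] at h2
  have h3 : ∑ k, ‖(θ : EuclideanSpace ℝ (Fin n)) k‖ ^ 2 = 1 := by
    have h4 := congrArg (· ^ 2) h2
    simp only [one_pow] at h4
    rw [Real.sq_sqrt (by positivity)] at h4
    exact h4.symm
  calc ∑ k, (θ : EuclideanSpace ℝ (Fin n)) k * (θ : EuclideanSpace ℝ (Fin n)) k
      = ∑ k, ‖(θ : EuclideanSpace ℝ (Fin n)) k‖ ^ 2 := by
        refine Finset.sum_congr rfl fun k _ => ?_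
        rw [Real.norm_eq_abs, sq_abs, sq]
    _ = 1 := h3

lemma moment (hn : 1 ≤ n) (i j : Fin n) :
    ∫ θ : sphere (0 : EuclideanSpace ℝ (Fin n)) 1,
        (θ : EuclideanSpace ℝ (Fin n)) i * (θ : EuclideanSpace ℝ (Fin n)) j ∂(sphereUniform n)
      = (1 / (n : ℝ)) * (if i = j then 1 else 0) := by
  haveI := isProb hn
  rcases eq_or_ne i j with rfl | hij
  · simp only [if_pos rfl, mul_one]
    have hswap : ∀ k l : Fin n,
        (∫ θ : sphere (0 : EuclideanSpace ℝ (Fin n)) 1,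
          (θ : EuclideanSpace ℝ (Fin n)) k * (θ : EuclideanSpace ℝ (Fin n)) k ∂(sphereUniform n))
        = ∫ θ : sphere (0 : EuclideanSpace ℝ (Fin n)) 1,
          (θ : EuclideanSpace ℝ (Fin n)) l * (θ : EuclideanSpace ℝ (Fin n)) l ∂(sphereUniform n) := by
      intro k l
      set T := LinearIsometryEquiv.piLpCongrLeft 2 ℝ ℝ (Equiv.swap k l) with hT
      have happ : ∀ (x : EuclideanSpace ℝ (Fin n)) (m : Fin n),
          T x m = x (Equiv.swap k l m) := by
        intro x m
        simp [hT, LinearIsometryEquiv.piLpCongrLeft_apply, Equiv.piCongrLeft'_apply,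
          Equiv.symm_swap]
      have key := integral_sMap T
        (fun θ => (θ : EuclideanSpace ℝ (Fin n)) l * (θ : EuclideanSpace ℝ (Fin n)) l)
        ((contCoord l).mul (contCoord l))
      have hL : ∀ θ : sphere (0 : EuclideanSpace ℝ (Fin n)) 1,
          (sMap T θ : EuclideanSpace ℝ (Fin n)) l * (sMap T θ : EuclideanSpace ℝ (Fin n)) l
          = (θ : EuclideanSpace ℝ (Fin n)) k * (θ : EuclideanSpace ℝ (Fin n)) k := by
        intro θ
        have : (sMap T θ : EuclideanSpace ℝ (Fin n)) l = (θ : EuclideanSpace ℝ (Fin n)) k := by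
          show T (θ : EuclideanSpace ℝ (Fin n)) l = _
          rw [happ, Equiv.swap_apply_right]
        rw [this]
      rw [← key]
      exact integral_congr_ae (Filter.Eventually.of_forall fun θ => (hL θ).symm)
    have hsum : ∑ k : Fin n,
        (∫ θ : sphere (0 : EuclideanSpace ℝ (Fin n)) 1,
          (θ : EuclideanSpace ℝ (Fin n)) k * (θ : EuclideanSpace ℝ (Fin n)) k ∂(sphereUniform n))
        = 1 := by
      rw [← integral_finset_sum _ (f := fun k (θ : sphere (0 : EuclideanSpace ℝ (Fin n)) 1) => (θ : EuclideanSpace ℝ (Fin n)) k * (θ : EuclideanSpace ℝ (Fin n)) k)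
        (fun k _ => integrable_cont hn ((contCoord k).mul (contCoord k)))]
      have : (∫ θ : sphere (0 : EuclideanSpace ℝ (Fin n)) 1,
          (∑ k, (θ : EuclideanSpace ℝ (Fin n)) k * (θ : EuclideanSpace ℝ (Fin n)) k)
          ∂(sphereUniform n))
          = ∫ _θ : sphere (0 : EuclideanSpace ℝ (Fin n)) 1, (1:ℝ) ∂(sphereUniform n) :=
        integral_congr_ae (Filter.Eventually.of_forall fun θ => sum_sq_coord θ)
      rw [this]
      simp
    have heach : ∀ k : Fin n,
        (∫ θ : sphere (0 : EuclideanSpace ℝ (Fin n)) 1,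
          (θ : EuclideanSpace ℝ (Fin n)) k * (θ : EuclideanSpace ℝ (Fin n)) k ∂(sphereUniform n))
        = ∫ θ : sphere (0 : EuclideanSpace ℝ (Fin n)) 1,
          (θ : EuclideanSpace ℝ (Fin n)) i * (θ : EuclideanSpace ℝ (Fin n)) i ∂(sphereUniform n) :=
      fun k => hswap k i
    rw [Finset.sum_congr rfl (fun k _ => heach k), Finset.sum_const, Finset.card_univ,
      Fintype.card_fin, nsmul_eq_mul] at hsum
    have hn' : (n : ℝ) ≠ 0 := by positivity
    have e : (∫ θ : sphere (0 : EuclideanSpace ℝ (Fin n)) 1,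
        (θ : EuclideanSpace ℝ (Fin n)) i * (θ : EuclideanSpace ℝ (Fin n)) i ∂(sphereUniform n)) = 1 / (n : ℝ) := by
      rw [eq_div_iff hn']; linarith [hsum]
    simp [e]
  · simp only [if_neg hij, mul_zero]
    set T := LinearIsometryEquiv.piLpCongrRight (𝕜 := ℝ) 2
      (fun m : Fin n => if m = i then LinearIsometryEquiv.neg ℝ
        else LinearIsometryEquiv.refl ℝ ℝ) with hT
    have happ : ∀ (x : EuclideanSpace ℝ (Fin n)) (m : Fin n),
        T x m = if m = i then -x m else x m := by
      intro x m
      rcases eq_or_ne m i with rfl | hm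
      · simp [hT, LinearIsometryEquiv.piLpCongrRight_apply]
      · simp [hT, LinearIsometryEquiv.piLpCongrRight_apply, hm]
    have key := integral_sMap T
      (fun θ => (θ : EuclideanSpace ℝ (Fin n)) i * (θ : EuclideanSpace ℝ (Fin n)) j)
      ((contCoord i).mul (contCoord j))
    have hL : ∀ θ : sphere (0 : EuclideanSpace ℝ (Fin n)) 1,
        (sMap T θ : EuclideanSpace ℝ (Fin n)) i * (sMap T θ : EuclideanSpace ℝ (Fin n)) j
        = -((θ : EuclideanSpace ℝ (Fin n)) i * (θ : EuclideanSpace ℝ (Fin n)) j) := by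
      intro θ
      have h1 : (sMap T θ : EuclideanSpace ℝ (Fin n)) i = -(θ : EuclideanSpace ℝ (Fin n)) i := by
        show T (θ : EuclideanSpace ℝ (Fin n)) i = _
        rw [happ]; simp
      have h2 : (sMap T θ : EuclideanSpace ℝ (Fin n)) j = (θ : EuclideanSpace ℝ (Fin n)) j := by
        show T (θ : EuclideanSpace ℝ (Fin n)) j = _
        rw [happ]; simp [hij.symm]
      rw [h1, h2]; ring
    have key2 : (∫ θ : sphere (0 : EuclideanSpace ℝ (Fin n)) 1,
        -((θ : EuclideanSpace ℝ (Fin n)) i * (θ : EuclideanSpace ℝ (Fin n)) j)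
        ∂(sphereUniform n))
        = ∫ θ : sphere (0 : EuclideanSpace ℝ (Fin n)) 1,
          (θ : EuclideanSpace ℝ (Fin n)) i * (θ : EuclideanSpace ℝ (Fin n)) j
          ∂(sphereUniform n) := by
      rw [← key]
      exact integral_congr_ae (Filter.Eventually.of_forall fun θ => (hL θ).symm)
    rw [integral_neg] at key2
    linarith

lemma weighted (hn : 1 ≤ n) (w : sphere (0 : EuclideanSpace ℝ (Fin n)) 1 → ℝ)
    (hw : Continuous w)
    (hmom : ∀ i j : Fin n,
      (∫ θ : sphere (0 : EuclideanSpace ℝ (Fin n)) 1,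
        w θ * ((θ : EuclideanSpace ℝ (Fin n)) i * (θ : EuclideanSpace ℝ (Fin n)) j)
        ∂(sphereUniform n))
      = (1 / (n : ℝ)) * (if i = j then 1 else 0))
    (A : Matrix (Fin n) (Fin n) ℝ) :
    (∫ θ : sphere (0 : EuclideanSpace ℝ (Fin n)) 1, w θ * squad A θ ∂(sphereUniform n))
      = (∑ k, A k k) / n := by
  haveI := isProb hn
  have h1 : (∫ θ : sphere (0 : EuclideanSpace ℝ (Fin n)) 1, w θ * squad A θ ∂(sphereUniform n))
      = ∫ θ : sphere (0 : EuclideanSpace ℝ (Fin n)) 1,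
        (∑ i, ∑ j, A i j * (w θ * ((θ : EuclideanSpace ℝ (Fin n)) i *
          (θ : EuclideanSpace ℝ (Fin n)) j))) ∂(sphereUniform n) := by
    refine integral_congr_ae (Filter.Eventually.of_forall fun θ => ?_)
    simp only [squad]
    rw [Finset.mul_sum]
    refine Finset.sum_congr rfl fun i _ => ?_
    rw [Finset.mul_sum]
    refine Finset.sum_congr rfl fun j _ => ?_
    ring
  rw [h1, integral_finset_sum _ (f := fun i θ => ∑ j, A i j * (w θ * ((θ : EuclideanSpace ℝ (Fin n)) i * (θ : EuclideanSpace ℝ (Fin n)) j))) (fun i _ => integrable_cont hn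
    (continuous_finset_sum _ fun j _ => continuous_const.mul
      (hw.mul ((contCoord i).mul (contCoord j)))))]
  have h2 : ∀ i : Fin n,
      (∫ θ : sphere (0 : EuclideanSpace ℝ (Fin n)) 1,
        (∑ j, A i j * (w θ * ((θ : EuclideanSpace ℝ (Fin n)) i *
          (θ : EuclideanSpace ℝ (Fin n)) j))) ∂(sphereUniform n))
      = A i i * (1 / (n:ℝ)) := by
    intro i
    rw [integral_finset_sum _ (f := fun j θ => A i j * (w θ * ((θ : EuclideanSpace ℝ (Fin n)) i * (θ : EuclideanSpace ℝ (Fin n)) j))) (fun j _ => (integrable_cont hn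
      (hw.mul ((contCoord i).mul (contCoord j)))).const_mul _)]
    have h3 : ∀ j : Fin n,
        (∫ θ : sphere (0 : EuclideanSpace ℝ (Fin n)) 1,
          A i j * (w θ * ((θ : EuclideanSpace ℝ (Fin n)) i *
            (θ : EuclideanSpace ℝ (Fin n)) j)) ∂(sphereUniform n))
        = A i j * ((1 / (n : ℝ)) * (if i = j then 1 else 0)) := by
      intro j
      rw [integral_const_mul, hmom i j]
    rw [Finset.sum_congr rfl fun j _ => h3 j]
    simp [Finset.sum_ite_eq, mul_comm]
  rw [Finset.sum_congr rfl fun i _ => h2 i, ← Finset.sum_mul, mul_one_div]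

lemma aux_key (a b : ℝ) (ha : 0 < a) :
    (1 - b / a) * (a ^ 2 - b ^ 2) = (a - b) ^ 2 * (a + b) / a := by
  field_simp
  ring

lemma aux_nonneg {u v : ℝ} (hu : 0 < u) (hv : 0 ≤ v) :
    0 ≤ (1 - Real.sqrt (v / u)) * (u - v) := by
  have ha := Real.sqrt_pos.2 hu
  have hb := Real.sqrt_nonneg v
  have hu2 : Real.sqrt u ^ 2 = u := Real.sq_sqrt hu.le
  have hv2 : Real.sqrt v ^ 2 = v := Real.sq_sqrt hv
  have h1 : Real.sqrt (v / u) = Real.sqrt v / Real.sqrt u := Real.sqrt_div hv u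
  have key := aux_key (Real.sqrt u) (Real.sqrt v) ha
  rw [hu2, hv2] at key
  rw [h1, key]
  positivity

lemma aux_eq {u v : ℝ} (hu : 0 < u) (hv : 0 ≤ v)
    (h : (1 - Real.sqrt (v / u)) * (u - v) = 0) : u = v := by
  have ha := Real.sqrt_pos.2 hu
  have hb := Real.sqrt_nonneg v
  have hu2 : Real.sqrt u ^ 2 = u := Real.sq_sqrt hu.le
  have hv2 : Real.sqrt v ^ 2 = v := Real.sq_sqrt hv
  have h1 : Real.sqrt (v / u) = Real.sqrt v / Real.sqrt u := Real.sqrt_div hv u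
  have key := aux_key (Real.sqrt u) (Real.sqrt v) ha
  rw [hu2, hv2] at key
  rw [h1, key] at h
  rcases div_eq_zero_iff.1 h with h2 | h2
  · rcases mul_eq_zero.1 h2 with h3 | h3
    · have h4 : Real.sqrt u - Real.sqrt v = 0 := by
        exact pow_eq_zero_iff two_ne_zero |>.1 h3
      rw [← hu2, ← hv2, show Real.sqrt u = Real.sqrt v by linarith]
    · exfalso; linarith
  · exact absurd h2 ha.ne'

end SlicedAux

/-- If `∫_{S^{n-1}} √(θᵀ Σ_f θ / θᵀ Σ θ) θθᵀ dσ(θ) = (1/n) I` (entrywise), with `Σ` symmetric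
positive definite and `Σ_f` symmetric positive semidefinite, then `Σ = Σ_f`. -/
theorem sliced_fixed_point_implies_equal
    (n : ℕ) (hn : 1 ≤ n)
    (S Sf : Matrix (Fin n) (Fin n) ℝ)
    (hS : S.PosDef) (hSf : Sf.PosSemidef)
    (h : ∀ i j : Fin n,
      (∫ θ : sphere (0 : EuclideanSpace ℝ (Fin n)) 1,
          Real.sqrt (squad Sf θ / squad S θ) *
            ((θ : EuclideanSpace ℝ (Fin n)) i * (θ : EuclideanSpace ℝ (Fin n)) j)
          ∂(sphereUniform n))
        = (1 / (n : ℝ)) * (if i = j then 1 else 0)) :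
    S = Sf := by
  classical
  haveI := SlicedAux.isProb hn
  haveI := SlicedAux.isOpenPos hn
  have hqpos : ∀ θ : sphere (0 : EuclideanSpace ℝ (Fin n)) 1, 0 < squad S θ :=
    fun θ => SlicedAux.squad_pos hS θ
  have hqfnn : ∀ θ : sphere (0 : EuclideanSpace ℝ (Fin n)) 1, 0 ≤ squad Sf θ :=
    fun θ => SlicedAux.squad_nonneg hSf θ
  have hfcont : Continuous fun θ : sphere (0 : EuclideanSpace ℝ (Fin n)) 1 =>
      Real.sqrt (squad Sf θ / squad S θ) :=
    Real.continuous_sqrt.comp ((SlicedAux.contSquad Sf).div (SlicedAux.contSquad S)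
      fun θ => (hqpos θ).ne')
  have hA := SlicedAux.weighted hn
    (fun θ => Real.sqrt (squad Sf θ / squad S θ)) hfcont (fun i j => h i j) (S - Sf)
  have hB := SlicedAux.weighted hn (fun _ => 1) continuous_const
    (fun i j => by simpa using SlicedAux.moment hn i j) (S - Sf)
  have hsub : ∀ θ : sphere (0 : EuclideanSpace ℝ (Fin n)) 1,
      squad (S - Sf) θ = squad S θ - squad Sf θ := by
    intro θ
    simp only [squad, Matrix.sub_apply]
    rw [← Finset.sum_sub_distrib]
    refine Finset.sum_congr rfl fun i _ => ?_
    rw [← Finset.sum_sub_distrib]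
    refine Finset.sum_congr rfl fun j _ => ?_
    ring
  have hgcont : Continuous fun θ : sphere (0 : EuclideanSpace ℝ (Fin n)) 1 =>
      (1 - Real.sqrt (squad Sf θ / squad S θ)) * (squad S θ - squad Sf θ) :=
    (continuous_const.sub hfcont).mul ((SlicedAux.contSquad S).sub (SlicedAux.contSquad Sf))
  have hint0 : (∫ θ : sphere (0 : EuclideanSpace ℝ (Fin n)) 1,
      (1 - Real.sqrt (squad Sf θ / squad S θ)) * (squad S θ - squad Sf θ)
      ∂(sphereUniform n)) = 0 := by
    have e1 : (fun θ : sphere (0 : EuclideanSpace ℝ (Fin n)) 1 =>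
        (1 - Real.sqrt (squad Sf θ / squad S θ)) * (squad S θ - squad Sf θ))
        = fun θ => (1 : ℝ) * squad (S - Sf) θ
            - Real.sqrt (squad Sf θ / squad S θ) * squad (S - Sf) θ := by
      funext θ
      rw [hsub θ]
      ring
    have i1 : Integrable (fun θ : sphere (0 : EuclideanSpace ℝ (Fin n)) 1 =>
        (1 : ℝ) * squad (S - Sf) θ) (sphereUniform n) :=
      SlicedAux.integrable_cont hn (continuous_const.mul (SlicedAux.contSquad _))
    have i2 : Integrable (fun θ : sphere (0 : EuclideanSpace ℝ (Fin n)) 1 =>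
        Real.sqrt (squad Sf θ / squad S θ) * squad (S - Sf) θ) (sphereUniform n) :=
      SlicedAux.integrable_cont hn (hfcont.mul (SlicedAux.contSquad _))
    rw [e1, integral_sub i1 i2]
    have hB' : (∫ θ : sphere (0 : EuclideanSpace ℝ (Fin n)) 1,
        (1 : ℝ) * squad (S - Sf) θ ∂(sphereUniform n)) = (∑ k, (S - Sf) k k) / n := hB
    have hA' : (∫ θ : sphere (0 : EuclideanSpace ℝ (Fin n)) 1,
        Real.sqrt (squad Sf θ / squad S θ) * squad (S - Sf) θ ∂(sphereUniform n))
        = (∑ k, (S - Sf) k k) / n := hA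
    rw [hA', hB', sub_self]
  have hgnn : (0 : sphere (0 : EuclideanSpace ℝ (Fin n)) 1 → ℝ)
      ≤ fun θ => (1 - Real.sqrt (squad Sf θ / squad S θ)) * (squad S θ - squad Sf θ) :=
    fun θ => SlicedAux.aux_nonneg (hqpos θ) (hqfnn θ)
  have hae := (integral_eq_zero_iff_of_nonneg hgnn
    (SlicedAux.integrable_cont hn hgcont)).1 hint0
  have hgeq := (Continuous.ae_eq_iff_eq (sphereUniform n) hgcont continuous_const).1 hae
  have hqq : ∀ θ : sphere (0 : EuclideanSpace ℝ (Fin n)) 1, squad S θ = squad Sf θ :=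
    fun θ => SlicedAux.aux_eq (hqpos θ) (hqfnn θ) (congrFun hgeq θ)
  have hQ : ∀ x : EuclideanSpace ℝ (Fin n), x ≠ 0 →
      ∑ i, ∑ j, x i * S i j * x j = ∑ i, ∑ j, x i * Sf i j * x j := by
    intro x hx
    have hnorm : (0:ℝ) < ‖x‖ := norm_pos_iff.2 hx
    have hmem : (‖x‖⁻¹ • x) ∈ sphere (0 : EuclideanSpace ℝ (Fin n)) 1 := by
      rw [mem_sphere_zero_iff_norm, norm_smul, norm_inv, norm_norm,
        inv_mul_cancel₀ hnorm.ne']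
    have hq := hqq ⟨‖x‖⁻¹ • x, hmem⟩
    have key : ∀ A : Matrix (Fin n) (Fin n) ℝ,
        squad A ⟨‖x‖⁻¹ • x, hmem⟩ = ‖x‖⁻¹ ^ 2 * ∑ i, ∑ j, x i * A i j * x j := by
      intro A
      simp only [squad]
      rw [Finset.mul_sum]
      refine Finset.sum_congr rfl fun i _ => ?_
      rw [Finset.mul_sum]
      refine Finset.sum_congr rfl fun j _ => ?_
      simp only [PiLp.smul_apply, smul_eq_mul]
      ring
    rw [key S, key Sf] at hq
    exact mul_left_cancel₀ (pow_ne_zero 2 (inv_ne_zero hnorm.ne')) hq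
  have hsymS : ∀ i j, S j i = S i j := by
    intro i j
    have := congrFun (congrFun hS.1 i) j
    simpa [Matrix.conjTranspose_apply] using this
  have hsymSf : ∀ i j, Sf j i = Sf i j := by
    intro i j
    have := congrFun (congrFun hSf.1 i) j
    simpa [Matrix.conjTranspose_apply] using this
  have hsingle : ∀ i : Fin n, S i i = Sf i i := by
    intro i
    have hx : (EuclideanSpace.single i (1:ℝ)) ≠ 0 := by
      intro h0
      have h1 : (EuclideanSpace.single i (1:ℝ)) i = 0 := by rw [h0]; rfl
      rw [EuclideanSpace.single_apply] at h1
      simp at h1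
    have hq := hQ _ hx
    simpa [EuclideanSpace.single_apply, ite_mul, mul_ite, Finset.sum_ite_eq,
      Finset.mem_univ] using hq
  ext i j
  rcases eq_or_ne i j with rfl | hij
  · exact hsingle i
  · have hx : (EuclideanSpace.single i (1:ℝ) + EuclideanSpace.single j (1:ℝ)) ≠ 0 := by
      intro h0
      have h1 : (EuclideanSpace.single i (1:ℝ) + EuclideanSpace.single j (1:ℝ)) i = 0 := by
        rw [h0]; rfl
      rw [PiLp.add_apply, EuclideanSpace.single_apply, EuclideanSpace.single_apply,
        if_pos rfl, if_neg hij] at h1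
      norm_num at h1
    have hq := hQ _ hx
    have expand : ∀ A : Matrix (Fin n) (Fin n) ℝ,
        ∑ i', ∑ j', (EuclideanSpace.single i (1:ℝ) + EuclideanSpace.single j (1:ℝ)) i'
            * A i' j' * (EuclideanSpace.single i (1:ℝ) + EuclideanSpace.single j (1:ℝ)) j'
          = A i i + A i j + A j i + A j j := by
      intro A
      have hcoord : ∀ k, (EuclideanSpace.single i (1:ℝ) + EuclideanSpace.single j (1:ℝ)) k
          = (if k = i then 1 else 0) + (if k = j then 1 else 0) := by
        intro k
        rw [PiLp.add_apply, EuclideanSpace.single_apply, EuclideanSpace.single_apply]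
      simp [hcoord, add_mul, mul_add, ite_mul, mul_ite, Finset.sum_add_distrib,
        Finset.sum_ite_eq, Finset.sum_ite_eq', hij, hij.symm]
      ring
    rw [expand S, expand Sf] at hq
    have h1 := hsingle i
    have h2 := hsingle j
    have h3 := hsymS i j
    have h4 := hsymSf i j
    linarith
end

section
/- Let n ≥ 1 and let σ denote the uniform probability measure on the unit sphere S^{n−1} = {θ ∈ ℝⁿ : ‖θ‖ = 1} (normalized rotation-invariant surface measure). Let d, g : S^{n−1} → ℝ be continuous functions with d(θ) > 0 and g(θ) ≥ 0 for all θ. If ∫_{S^{n−1}} sqrt(d(θ) g(θ)) σ(dθ) = ∫_{S^{n−1}} d(θ) σ(dθ) and ∫_{S^{n−1}} g(θ)^{3/2} d(θ)^{−1/2} σ(dθ) = ∫_{S^{n−1}} g(θ) σ(dθ), then d(θ) = g(θ) for every θ ∈ S^{n−1}. -/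
open MeasureTheory Metric
open Set

open scoped Pointwise in
lemma toSphere_pos_of_isOpen (n : ℕ) (hn : 1 ≤ n)
    {U : Set (sphere (0 : EuclideanSpace ℝ (Fin n)) 1)} (hU : IsOpen U) (hne : U.Nonempty) :
    0 < (volume : Measure (EuclideanSpace ℝ (Fin n))).toSphere U := by
  set E := EuclideanSpace ℝ (Fin n)
  rw [Measure.toSphere_apply' _ hU.measurableSet]
  have hdim : Module.finrank ℝ E = n := finrank_euclideanSpace_fin
  have h1 : (0:ℝ) < 1 := one_pos
  have haux := (volume : Measure E).toSphere_apply_aux U ⟨1, h1⟩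
  rw [show ((⟨1, h1⟩ : Ioi (0:ℝ)) : ℝ) = 1 from rfl] at haux
  rw [← haux]
  have hopen : IsOpen ((Subtype.val : ({0}ᶜ : Set (EuclideanSpace ℝ (Fin n))) → EuclideanSpace ℝ (Fin n)) '' ((homeomorphUnitSphereProd E) ⁻¹' (U ×ˢ Iio (⟨1, h1⟩ : Ioi (0:ℝ))))) := by
    apply (isOpen_compl_singleton (x := (0:E))).isOpenMap_subtype_val
    exact (homeomorphUnitSphereProd E).continuous.isOpen_preimage _ (hU.prod isOpen_Iio)
  have hne' : ((Subtype.val : ({0}ᶜ : Set (EuclideanSpace ℝ (Fin n))) → EuclideanSpace ℝ (Fin n)) '' ((homeomorphUnitSphereProd E) ⁻¹' (U ×ˢ Iio (⟨1, h1⟩ : Ioi (0:ℝ))))).Nonempty := by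
    obtain ⟨θ, hθ⟩ := hne
    refine ⟨_, Set.mem_image_of_mem _ (x := (homeomorphUnitSphereProd E).symm (θ, ⟨1/2, by norm_num⟩)) ?_⟩
    simp only [Set.mem_preimage, Homeomorph.apply_symm_apply]
    exact ⟨hθ, by show (1/2:ℝ) < 1; norm_num⟩
  have hvol := hopen.measure_pos (volume : Measure E) hne'
  exact ENNReal.mul_pos (by simp [hdim]; omega) hvol.ne'

lemma sphereUniform_facts (n : ℕ) (hn : 1 ≤ n) :
    IsProbabilityMeasure (sphereUniform n) ∧ (sphereUniform n).IsOpenPosMeasure := by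
  haveI : Nontrivial (EuclideanSpace ℝ (Fin n)) := by
    have : 0 < Module.finrank ℝ (EuclideanSpace ℝ (Fin n)) := by
      rw [finrank_euclideanSpace_fin]; omega
    exact Module.nontrivial_of_finrank_pos this
  have hsne : (Set.univ : Set (sphere (0 : EuclideanSpace ℝ (Fin n)) 1)).Nonempty := by
    obtain ⟨x, hx⟩ := NormedSpace.sphere_nonempty (E := EuclideanSpace ℝ (Fin n)) (x := 0) (r := 1) |>.2 zero_le_one
    exact ⟨⟨x, hx⟩, trivial⟩
  have hc : 0 < (volume : Measure (EuclideanSpace ℝ (Fin n))).toSphere Set.univ :=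
    toSphere_pos_of_isOpen n hn isOpen_univ hsne
  have hcfin : (volume : Measure (EuclideanSpace ℝ (Fin n))).toSphere Set.univ ≠ ⊤ :=
    measure_ne_top _ _
  constructor
  · constructor
    rw [sphereUniform, Measure.smul_apply, smul_eq_mul]
    exact ENNReal.inv_mul_cancel hc.ne' hcfin
  · constructor
    intro U hU hne
    rw [sphereUniform, Measure.smul_apply, smul_eq_mul]
    exact (ENNReal.mul_pos (ENNReal.inv_ne_zero.mpr hcfin) (toSphere_pos_of_isOpen n hn hU hne).ne').ne'

lemma alg_id (a b G D : ℝ) (hb : b ≠ 0) (hG : a ^ 2 = G) (hD : b ^ 2 = D) :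
    (a - b) * (G - D) / b = (a ^ 3 / b - b * a) - (G - D) := by
  subst hG; subst hD; field_simp

lemma alg_conclude (a b G D : ℝ) (hb : 0 < b) (ha : 0 ≤ a) (hG : a ^ 2 = G) (hD : b ^ 2 = D)
    (hz : (a - b) * (G - D) = 0) : D = G := by
  subst hG; subst hD
  have key : (a - b) ^ 2 * (a + b) = 0 := by linear_combination hz
  rcases mul_eq_zero.1 key with h | h
  · have : a - b = 0 := pow_eq_zero_iff (n := 2) (by norm_num) |>.1 h
    nlinarith
  · nlinarith

/-- If `d > 0` and `g ≥ 0` are continuous on the sphere and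
`∫ √(dg) dσ = ∫ d dσ` and `∫ g^{3/2} d^{-1/2} dσ = ∫ g dσ`, then `d ≡ g`. -/
theorem sliced_integral_conditions_imply_equal
    (n : ℕ) (hn : 1 ≤ n)
    (d g : sphere (0 : EuclideanSpace ℝ (Fin n)) 1 → ℝ)
    (hd : Continuous d) (hg : Continuous g)
    (hdpos : ∀ θ, 0 < d θ) (hgnn : ∀ θ, 0 ≤ g θ)
    (h1 : ∫ θ, Real.sqrt (d θ * g θ) ∂(sphereUniform n)
        = ∫ θ, d θ ∂(sphereUniform n))
    (h2 : ∫ θ, g θ ^ ((3 : ℝ) / 2) * d θ ^ (-(1 : ℝ) / 2) ∂(sphereUniform n)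
        = ∫ θ, g θ ∂(sphereUniform n)) :
    ∀ θ, d θ = g θ := by
  obtain ⟨hprob, hpos⟩ := sphereUniform_facts n hn
  haveI := hprob
  haveI := hpos
  have hsqg : ∀ θ, Real.sqrt (g θ) ^ 2 = g θ := fun θ => Real.sq_sqrt (hgnn θ)
  have hsqd : ∀ θ, Real.sqrt (d θ) ^ 2 = d θ := fun θ => Real.sq_sqrt (hdpos θ).le
  have hsd : ∀ θ, 0 < Real.sqrt (d θ) := fun θ => Real.sqrt_pos.2 (hdpos θ)
  -- rewrite the integrand of h2
  have hArw : ∀ θ, g θ ^ ((3 : ℝ) / 2) * d θ ^ (-(1 : ℝ) / 2)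
      = Real.sqrt (g θ) ^ 3 / Real.sqrt (d θ) := by
    intro θ
    have e1 : g θ ^ ((3 : ℝ) / 2) = Real.sqrt (g θ) ^ 3 := by
      rw [Real.sqrt_eq_rpow, ← Real.rpow_natCast (g θ ^ ((1:ℝ)/2)) 3,
        ← Real.rpow_mul (hgnn θ)]
      norm_num
    have e2 : d θ ^ (-(1 : ℝ) / 2) = (Real.sqrt (d θ))⁻¹ := by
      rw [Real.sqrt_eq_rpow, ← Real.rpow_neg_one (d θ ^ ((1:ℝ)/2)),
        ← Real.rpow_mul (hdpos θ).le]
      norm_num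
    rw [e1, e2, div_eq_mul_inv]
  have hBrw : ∀ θ, Real.sqrt (d θ * g θ) = Real.sqrt (d θ) * Real.sqrt (g θ) :=
    fun θ => Real.sqrt_mul (hdpos θ).le _
  -- pointwise identity
  have hid : ∀ θ, (Real.sqrt (g θ) - Real.sqrt (d θ)) * (g θ - d θ) / Real.sqrt (d θ)
      = (g θ ^ ((3 : ℝ) / 2) * d θ ^ (-(1 : ℝ) / 2) - Real.sqrt (d θ * g θ)) - (g θ - d θ) := by
    intro θ
    rw [hArw θ, hBrw θ]
    have := alg_id (Real.sqrt (g θ)) (Real.sqrt (d θ)) (g θ) (d θ) (hsd θ).ne'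
      (hsqg θ) (hsqd θ)
    rw [this]
  -- nonnegativity
  have hfnn : ∀ θ, 0 ≤ (Real.sqrt (g θ) - Real.sqrt (d θ)) * (g θ - d θ) / Real.sqrt (d θ) := by
    intro θ
    apply div_nonneg _ (Real.sqrt_nonneg _)
    rcases le_total (d θ) (g θ) with h | h
    · exact mul_nonneg (by simpa using Real.sqrt_le_sqrt h) (by linarith)
    · have h1' : Real.sqrt (g θ) - Real.sqrt (d θ) ≤ 0 := by
        simpa using Real.sqrt_le_sqrt h
      nlinarith
  -- integrability of continuous functions
  have hint : ∀ (h : sphere (0 : EuclideanSpace ℝ (Fin n)) 1 → ℝ),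
      Continuous h → Integrable h (sphereUniform n) := fun h hh =>
    hh.integrable_of_hasCompactSupport (HasCompactSupport.of_compactSpace h)
  have hAc : Continuous fun θ => g θ ^ ((3 : ℝ) / 2) * d θ ^ (-(1 : ℝ) / 2) :=
    (hg.rpow_const (fun θ => Or.inr (by norm_num))).mul
      (hd.rpow_const (fun θ => Or.inl (hdpos θ).ne'))
  have hBc : Continuous fun θ => Real.sqrt (d θ * g θ) :=
    Real.continuous_sqrt.comp (hd.mul hg)
  have hfc : Continuous fun θ =>
      (Real.sqrt (g θ) - Real.sqrt (d θ)) * (g θ - d θ) / Real.sqrt (d θ) := by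
    apply Continuous.div
    · exact ((Real.continuous_sqrt.comp hg).sub (Real.continuous_sqrt.comp hd)).mul (hg.sub hd)
    · exact Real.continuous_sqrt.comp hd
    · exact fun θ => (hsd θ).ne'
  -- the integral of f is zero
  have hI : ∫ θ, (Real.sqrt (g θ) - Real.sqrt (d θ)) * (g θ - d θ) / Real.sqrt (d θ)
      ∂(sphereUniform n) = 0 := by
    calc ∫ θ, (Real.sqrt (g θ) - Real.sqrt (d θ)) * (g θ - d θ) / Real.sqrt (d θ)
        ∂(sphereUniform n)
        = ∫ θ, (g θ ^ ((3 : ℝ) / 2) * d θ ^ (-(1 : ℝ) / 2) - Real.sqrt (d θ * g θ))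
            - (g θ - d θ) ∂(sphereUniform n) := by
          exact integral_congr_ae (Filter.Eventually.of_forall hid)
      _ = (∫ θ, g θ ^ ((3 : ℝ) / 2) * d θ ^ (-(1 : ℝ) / 2) ∂(sphereUniform n)
            - ∫ θ, Real.sqrt (d θ * g θ) ∂(sphereUniform n))
          - (∫ θ, g θ ∂(sphereUniform n) - ∫ θ, d θ ∂(sphereUniform n)) := by
          rw [integral_sub
              (hint (fun θ => g θ ^ ((3 : ℝ) / 2) * d θ ^ (-(1 : ℝ) / 2) - Real.sqrt (d θ * g θ))
                (hAc.sub hBc))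
              (hint (fun θ => g θ - d θ) (hg.sub hd)),
            integral_sub (hint _ hAc) (hint _ hBc), integral_sub (hint _ hg) (hint _ hd)]
      _ = 0 := by rw [h1, h2]; ring
  -- f vanishes everywhere
  have hfz : ∀ θ, (Real.sqrt (g θ) - Real.sqrt (d θ)) * (g θ - d θ) / Real.sqrt (d θ) = 0 := by
    have hae := (integral_eq_zero_iff_of_nonneg hfnn (hint _ hfc)).1 hI
    have heq := (Continuous.ae_eq_iff_eq (sphereUniform n) hfc continuous_const).1 hae
    intro θ; exact congrFun heq θ
  -- conclude
  intro θ
  have hz : (Real.sqrt (g θ) - Real.sqrt (d θ)) * (g θ - d θ) = 0 := by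
    have := hfz θ
    rcases div_eq_zero_iff.1 this with h | h
    · exact h
    · exact absurd h (hsd θ).ne'
  exact alg_conclude (Real.sqrt (g θ)) (Real.sqrt (d θ)) (g θ) (d θ) (hsd θ)
    (Real.sqrt_nonneg _) (hsqg θ) (hsqd θ) hz
end

section
/- Let n ≥ 1, T > 0, m_f ∈ ℝⁿ, let Σ_f be a symmetric positive definite n×n real matrix, and let σ denote the uniform probability measure on the unit sphere S^{n−1} = {θ ∈ ℝⁿ : ‖θ‖ = 1} (normalized rotation-invariant surface measure). Suppose m : [0, T) → ℝⁿ and Σ : [0, T) → (n×n real symmetric positive definite matrices) are differentiable and satisfy, for all t ∈ [0, T), m′(t) = −(1/(n(T − t)))(m(t) − m_f) and Σ′(t) = K(t) Σ(t) + Σ(t) K(t)ᵀ, where K(t) := (1/(T − t)) [ ∫_{S^{n−1}} sqrt((θᵀ Σ_f θ)/(θᵀ Σ(t) θ)) θ θᵀ σ(dθ) − (1/n) I_n ]. Define f : [0, T) → ℝ by f(t) := ∫_{S^{n−1}} [ (θᵀ(m(t) − m_f))² + ( sqrt(θᵀ Σ(t) θ) − sqrt(θᵀ Σ_f θ) )²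 ] σ(dθ). Then f is nonincreasing on [0, T). -/
open MeasureTheory Metric Matrix
open Pointwise Filter Topology

/-- The projection `θᵀ x` of `x ∈ ℝⁿ` onto the direction `θ` of the unit sphere. -/
noncomputable def sprj {n : ℕ} (θ : sphere (0 : EuclideanSpace ℝ (Fin n)) 1)
    (x : EuclideanSpace ℝ (Fin n)) : ℝ :=
  ∑ i, (θ : EuclideanSpace ℝ (Fin n)) i * x i

variable {n : ℕ}
abbrev Eucl (n : ℕ) := EuclideanSpace ℝ (Fin n)
abbrev Sph (n : ℕ) := sphere (0 : Eucl n) 1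

noncomputable def sphMap (e : Eucl n ≃ₗᵢ[ℝ] Eucl n) (θ : Sph n) : Sph n :=
  ⟨e θ, by
    have : ‖e (θ : Eucl n)‖ = 1 := by
      rw [e.norm_map]; simpa [mem_sphere_zero_iff_norm] using θ.2
    simpa [mem_sphere_zero_iff_norm] using this⟩

lemma sphMap_cont (e : Eucl n ≃ₗᵢ[ℝ] Eucl n) : Continuous (sphMap e) :=
  Continuous.subtype_mk (e.continuous.comp continuous_subtype_val) _

noncomputable def sphMEquiv (e : Eucl n ≃ₗᵢ[ℝ] Eucl n) : Sph n ≃ᵐ Sph n where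
  toFun := sphMap e
  invFun := sphMap e.symm
  left_inv := fun θ => by simp [sphMap]
  right_inv := fun θ => by simp [sphMap]
  measurable_toFun := (sphMap_cont e).measurable
  measurable_invFun := (sphMap_cont e.symm).measurable

lemma volume_preimage (e : Eucl n ≃ₗᵢ[ℝ] Eucl n) (B : Set (Eucl n)) :
    volume (e ⁻¹' B) = volume B := by
  have h := e.measurePreserving.map_eq
  calc volume (e ⁻¹' B) = volume ((e.toHomeomorph.toMeasurableEquiv) ⁻¹' B) := rfl
    _ = (volume.map (e.toHomeomorph.toMeasurableEquiv)) B :=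
        (MeasurableEquiv.map_apply _ _).symm
    _ = volume B := by
        have h2 : ⇑(e.toHomeomorph.toMeasurableEquiv) = ⇑e := rfl
        rw [h2, h]

lemma toSphere_map (e : Eucl n ≃ₗᵢ[ℝ] Eucl n) :
    ((volume : Measure (Eucl n)).toSphere).map (sphMap e) = (volume : Measure (Eucl n)).toSphere := by
  ext s hs
  rw [Measure.map_apply (sphMap_cont e).measurable hs]
  rw [Measure.toSphere_apply' _ hs, Measure.toSphere_apply' _ ((sphMap_cont e).measurable hs)]
  congr 1
  have hset : (Set.Ioo (0:ℝ) 1 • (Subtype.val '' (sphMap e ⁻¹' s)))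
      = e ⁻¹' (Set.Ioo (0:ℝ) 1 • (Subtype.val '' s)) := by
    ext x
    constructor
    · rintro ⟨r, hr, y, ⟨θ, hθ, rfl⟩, rfl⟩
      refine ⟨r, hr, e θ, ⟨sphMap e θ, hθ, rfl⟩, ?_⟩
      simp [e.map_smul]
    · rintro ⟨r, hr, y, ⟨θ, hθ, rfl⟩, hx⟩
      refine ⟨r, hr, e.symm θ, ⟨sphMap e.symm θ, ?_, rfl⟩, ?_⟩
      · simpa [sphMap, show (sphMap e.symm θ : Eucl n) = e.symm θ from rfl] using
          (by simpa [sphMap] using hθ : (⟨e (e.symm θ), by simp [sphMap]⟩ : Sph n) ∈ s)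
      · apply e.injective
        rw [e.map_smul]
        simpa using hx
  rw [hset, volume_preimage]

lemma sphereUniform_map (e : Eucl n ≃ₗᵢ[ℝ] Eucl n) :
    (sphereUniform n).map (sphMap e) = sphereUniform n := by
  unfold sphereUniform
  rw [Measure.map_smul, toSphere_map]

lemma integral_comp_sphMap (e : Eucl n ≃ₗᵢ[ℝ] Eucl n) (g : Sph n → ℝ) :
    ∫ θ, g (sphMap e θ) ∂(sphereUniform n) = ∫ θ, g θ ∂(sphereUniform n) := by
  conv_rhs => rw [← sphereUniform_map e]
  have h : ⇑(sphMEquiv e) = sphMap e := rfl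
  rw [show Measure.map (sphMap e) (sphereUniform n)
      = Measure.map (sphMEquiv e) (sphereUniform n) from by rw [h]]
  rw [MeasureTheory.integral_map_equiv (sphMEquiv e) g]
  rfl

lemma sphereUniform_prob (hn : 1 ≤ n) : IsProbabilityMeasure (sphereUniform n) := by
  constructor
  have hdim : Module.finrank ℝ (Eucl n) = n := finrank_euclideanSpace_fin
  have h0 : (volume : Measure (Eucl n)).toSphere Set.univ ≠ 0 := by
    rw [Measure.toSphere_apply_univ, hdim]
    exact mul_ne_zero (by exact_mod_cast (Nat.pos_of_ne_zero (by omega)).ne') (measure_ball_pos _ _ one_pos).ne'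
  have htop : (volume : Measure (Eucl n)).toSphere Set.univ ≠ ⊤ := measure_ne_top _ _
  unfold sphereUniform
  rw [Measure.smul_apply, smul_eq_mul, ENNReal.inv_mul_cancel h0 htop]

instance sphereUniform_finite : IsFiniteMeasure (sphereUniform n) := by
  constructor
  unfold sphereUniform
  rw [Measure.smul_apply, smul_eq_mul]
  rcases eq_or_ne ((volume : Measure (Eucl n)).toSphere Set.univ) 0 with h | h
  · simp [h]
  · rw [ENNReal.inv_mul_cancel h (measure_ne_top _ _)]
    exact ENNReal.one_lt_top

lemma integrable_cont (g : Sph n → ℝ) (hg : Continuous g) :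
    Integrable g (sphereUniform n) := by
  obtain ⟨C, hC⟩ := (isCompact_univ (X := Sph n)).exists_bound_of_continuousOn hg.continuousOn
  exact ⟨hg.aestronglyMeasurable, MeasureTheory.HasFiniteIntegral.of_bounded
    (C := C) (ae_of_all _ fun θ => hC θ trivial)⟩

lemma cont_coord (i : Fin n) : Continuous fun θ : Sph n => (θ : Eucl n) i := by
  have h1 : Continuous fun x : Eucl n => x i := by
    exact (EuclideanSpace.proj i).continuous
  exact h1.comp continuous_subtype_val

noncomputable def negIso (i : Fin n) : Eucl n ≃ₗᵢ[ℝ] Eucl n :=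
  LinearIsometryEquiv.piLpCongrRight 2
    (fun k => if k = i then LinearIsometryEquiv.neg ℝ else LinearIsometryEquiv.refl ℝ ℝ)

lemma negIso_apply (i : Fin n) (x : Eucl n) (k : Fin n) :
    (negIso i x) k = if k = i then -(x k) else x k := by
  by_cases h : k = i
  · subst h; simp [negIso]
  · simp [negIso, h]

noncomputable def swapIso (i j : Fin n) : Eucl n ≃ₗᵢ[ℝ] Eucl n :=
  LinearIsometryEquiv.piLpCongrLeft 2 ℝ ℝ (Equiv.swap i j)

lemma swapIso_apply (i j : Fin n) (x : Eucl n) (k : Fin n) :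
    (swapIso i j x) k = x (Equiv.swap i j k) := by
  simp [swapIso, LinearIsometryEquiv.piLpCongrLeft_apply, Equiv.piCongrLeft'_apply,
    Equiv.symm_swap]

lemma sum_sq_coord (θ : Sph n) : ∑ k, (θ : Eucl n) k ^ 2 = 1 := by
  have h : ‖(θ : Eucl n)‖ = 1 := by simpa [mem_sphere_zero_iff_norm] using θ.2
  rw [EuclideanSpace.norm_eq] at h
  have h2 : ∑ k, ‖(θ : Eucl n) k‖ ^ 2 = 1 := by
    have := congrArg (fun x => x ^ 2) h
    simpa [Real.sq_sqrt (Finset.sum_nonneg fun k _ => sq_nonneg _)] using this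
  simpa [Real.norm_eq_abs, sq_abs] using h2

lemma abs_coord_le (θ : Sph n) (i : Fin n) : |(θ : Eucl n) i| ≤ 1 := by
  have h := sum_sq_coord θ
  have h1 : (θ : Eucl n) i ^ 2 ≤ 1 := by
    rw [← h]
    exact Finset.single_le_sum (f := fun k => (θ : Eucl n) k ^ 2) (fun k _ => sq_nonneg _) (Finset.mem_univ i)
  nlinarith [abs_nonneg ((θ : Eucl n) i), sq_abs ((θ : Eucl n) i)]

lemma moment (hn : 1 ≤ n) (i j : Fin n) :
    ∫ θ : Sph n, (θ : Eucl n) i * (θ : Eucl n) j ∂(sphereUniform n)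
      = if i = j then (1 / n : ℝ) else 0 := by
  have hprob := sphereUniform_prob hn
  by_cases hij : i = j
  · subst hij
    simp only [if_pos rfl]
    -- all diagonal moments equal
    have key : ∀ k l : Fin n, (∫ θ : Sph n, (θ : Eucl n) k * (θ : Eucl n) k ∂(sphereUniform n))
        = ∫ θ : Sph n, (θ : Eucl n) l * (θ : Eucl n) l ∂(sphereUniform n) := by
      intro k l
      have := integral_comp_sphMap (swapIso k l)
        (fun θ => (θ : Eucl n) k * (θ : Eucl n) k)
      rw [← this]
      congr 1
      ext θ
      have : (sphMap (swapIso k l) θ : Eucl n) k = (θ : Eucl n) l := by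
        have : (sphMap (swapIso k l) θ : Eucl n) = swapIso k l (θ : Eucl n) := rfl
        rw [this, swapIso_apply, Equiv.swap_apply_left]
      rw [this]
    have hsum : ∑ k : Fin n, (∫ θ : Sph n, (θ : Eucl n) k * (θ : Eucl n) k ∂(sphereUniform n)) = 1 := by
      rw [← MeasureTheory.integral_finset_sum]
      · have : ∀ θ : Sph n, ∑ k : Fin n, (θ : Eucl n) k * (θ : Eucl n) k = 1 := by
          intro θ
          have := sum_sq_coord θ
          simpa [sq] using this
        rw [MeasureTheory.integral_congr_ae (ae_of_all _ fun θ => this θ)]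
        simp
      · intro k _
        exact integrable_cont _ (((cont_coord k).mul (cont_coord k)))
    rw [Finset.sum_congr rfl fun k _ => key k i, Finset.sum_const, Finset.card_univ,
      Fintype.card_fin, nsmul_eq_mul] at hsum
    have hn' : (n : ℝ) ≠ 0 := by exact_mod_cast (Nat.pos_of_ne_zero (by omega)).ne'
    have hI : ∫ θ : Sph n, (θ : Eucl n) i * (θ : Eucl n) i ∂(sphereUniform n) = 1 / n := by
      rw [eq_div_iff hn']; linarith
    simpa using hI
  · simp only [if_neg hij]
    have h := integral_comp_sphMap (negIso i) (fun θ => (θ : Eucl n) i * (θ : Eucl n) j)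
    have heq : ∀ θ : Sph n,
        (sphMap (negIso i) θ : Eucl n) i * (sphMap (negIso i) θ : Eucl n) j
          = -((θ : Eucl n) i * (θ : Eucl n) j) := by
      intro θ
      have h1 : (sphMap (negIso i) θ : Eucl n) = negIso i (θ : Eucl n) := rfl
      rw [h1, negIso_apply, negIso_apply, if_pos rfl, if_neg (Ne.symm hij)]
      ring
    rw [show (fun θ : Sph n => (sphMap (negIso i) θ : Eucl n) i * (sphMap (negIso i) θ : Eucl n) j)
        = fun θ : Sph n => -((θ : Eucl n) i * (θ : Eucl n) j) from funext heq] at h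
    rw [MeasureTheory.integral_neg] at h
    linarith

lemma sprj_cont (x : Eucl n) : Continuous fun θ : Sph n => sprj θ x := by
  unfold sprj
  exact continuous_finset_sum _ fun i _ => (cont_coord i).mul continuous_const

lemma squad_cont (A : Matrix (Fin n) (Fin n) ℝ) : Continuous (squad A) := by
  unfold squad
  exact continuous_finset_sum _ fun i _ => continuous_finset_sum _ fun j _ =>
    ((cont_coord i).mul continuous_const).mul (cont_coord j)

lemma sprj_eq_inner (θ : Sph n) (x : Eucl n) : sprj θ x = inner ℝ (θ : Eucl n) x := by
  simp [sprj, PiLp.inner_apply, RCLike.inner_apply, mul_comm]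

lemma abs_sprj_le (θ : Sph n) (x : Eucl n) : |sprj θ x| ≤ ‖x‖ := by
  rw [sprj_eq_inner]
  have h := abs_real_inner_le_norm (θ : Eucl n) x
  have hθ : ‖(θ : Eucl n)‖ = 1 := by simpa [mem_sphere_zero_iff_norm] using θ.2
  rw [hθ, one_mul] at h
  exact h

lemma squad_eq_dot (A : Matrix (Fin n) (Fin n) ℝ) (θ : Sph n) :
    squad A θ = (fun i => (θ : Eucl n) i) ⬝ᵥ (A *ᵥ fun i => (θ : Eucl n) i) := by
  simp [squad, dotProduct, Matrix.mulVec, Finset.mul_sum, mul_assoc]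

lemma squad_pos {A : Matrix (Fin n) (Fin n) ℝ} (hA : A.PosDef) (θ : Sph n) :
    0 < squad A θ := by
  rw [squad_eq_dot]
  have hθ : (fun i => (θ : Eucl n) i) ≠ 0 := by
    intro h
    have h1 : ‖(θ : Eucl n)‖ = 1 := by simpa [mem_sphere_zero_iff_norm] using θ.2
    have : (θ : Eucl n) = 0 := by
      ext i
      exact congrFun h i
    rw [this] at h1
    simp at h1
  have := hA.dotProduct_mulVec_pos hθ
  simpa using this

lemma quad_nonneg {A : Matrix (Fin n) (Fin n) ℝ} (hA : A.PosSemidef) (x : Fin n → ℝ) :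
    0 ≤ ∑ i, ∑ j, x i * A i j * x j := by
  have := hA.dotProduct_mulVec_nonneg x
  simpa [dotProduct, Matrix.mulVec, Finset.mul_sum, mul_assoc] using this

lemma abs_squad_le (A : Matrix (Fin n) (Fin n) ℝ) (θ : Sph n) :
    |squad A θ| ≤ ∑ i, ∑ j, |A i j| := by
  unfold squad
  refine (Finset.abs_sum_le_sum_abs _ _).trans ?_
  refine Finset.sum_le_sum fun i _ => ?_
  refine (Finset.abs_sum_le_sum_abs _ _).trans ?_
  refine Finset.sum_le_sum fun j _ => ?_
  rw [abs_mul, abs_mul]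
  have hi := abs_coord_le θ i
  have hj := abs_coord_le θ j
  have hAij := abs_nonneg (A i j)
  have hi0 := abs_nonneg ((θ : Eucl n) i)
  have hj0 := abs_nonneg ((θ : Eucl n) j)
  calc |(θ : Eucl n) i| * |A i j| * |(θ : Eucl n) j| ≤ 1 * |A i j| * 1 := by
        apply mul_le_mul (mul_le_mul hi le_rfl hAij (by norm_num)) hj hj0 (by positivity)
    _ = |A i j| := by ring

set_option maxHeartbeats 1600000 in
/-- Along the mean/covariance dynamics induced by the ideal sliced controller, the squared
sliced Wasserstein distance
`f(t) = ∫ [(θᵀ(m(t)−m_f))² + (√(θᵀΣ(t)θ) − √(θᵀΣ_fθ))²] dσ(θ)` is nonincreasing on `[0,T)`. -/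
theorem sliced_SW2_nonincreasing
    (n : ℕ) (hn : 1 ≤ n) (T : ℝ) (hT : 0 < T)
    (mf : EuclideanSpace ℝ (Fin n))
    (Sf : Matrix (Fin n) (Fin n) ℝ) (hSf : Sf.PosDef)
    (m : ℝ → EuclideanSpace ℝ (Fin n))
    (S : ℝ → Matrix (Fin n) (Fin n) ℝ)
    (hpos : ∀ t ∈ Set.Ico (0 : ℝ) T, (S t).PosDef)
    (K : ℝ → Matrix (Fin n) (Fin n) ℝ)
    (hK : ∀ t ∈ Set.Ico (0 : ℝ) T, ∀ i j : Fin n,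
      K t i j = (1 / (T - t)) *
        ((∫ θ : sphere (0 : EuclideanSpace ℝ (Fin n)) 1,
            Real.sqrt (squad Sf θ / squad (S t) θ) *
              ((θ : EuclideanSpace ℝ (Fin n)) i * (θ : EuclideanSpace ℝ (Fin n)) j)
            ∂(sphereUniform n))
          - (1 / (n : ℝ)) * (if i = j then 1 else 0)))
    (hm : ∀ t ∈ Set.Ico (0 : ℝ) T,
      HasDerivWithinAt m (-(1 / ((n : ℝ) * (T - t))) • (m t - mf)) (Set.Ico (0 : ℝ) T) t)
    (hS : ∀ t ∈ Set.Ico (0 : ℝ) T, ∀ i j : Fin n,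
      HasDerivWithinAt (fun s => S s i j)
        ((K t * S t + S t * (K t)ᵀ) i j) (Set.Ico (0 : ℝ) T) t) :
    AntitoneOn
      (fun t => ∫ θ : sphere (0 : EuclideanSpace ℝ (Fin n)) 1,
        (sprj θ (m t - mf)) ^ 2 +
          (Real.sqrt (squad (S t) θ) - Real.sqrt (squad Sf θ)) ^ 2
        ∂(sphereUniform n))
      (Set.Ico (0 : ℝ) T) := by
  classical
  have hprob : IsProbabilityMeasure (sphereUniform n) := sphereUniform_prob hn
  have hnR : (0:ℝ) < n := by exact_mod_cast Nat.pos_of_ne_zero (by omega)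
  have hSf_pos : ∀ θ : Sph n, 0 < squad Sf θ := squad_pos hSf
  have hSt_pos : ∀ t ∈ Set.Ico (0:ℝ) T, ∀ θ : Sph n, 0 < squad (S t) θ :=
    fun t ht θ => squad_pos (hpos t ht) θ
  set μ := sphereUniform n with hμdef
  set F : ℝ → Sph n → ℝ := fun t θ =>
    (sprj θ (m t - mf)) ^ 2 +
      (Real.sqrt (squad (S t) θ) - Real.sqrt (squad Sf θ)) ^ 2 with hFdef
  set G : ℝ → Sph n → ℝ := fun t θ =>
    -(2/((n:ℝ)*(T - t))) * (sprj θ (m t - mf))^2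
      + (1 - Real.sqrt (squad Sf θ)/Real.sqrt (squad (S t) θ))
          * squad (K t * S t + S t * (K t)ᵀ) θ with hGdef
  -- continuity of F in θ
  have hFcont : ∀ t : ℝ, Continuous (F t) := by
    intro t
    exact ((sprj_cont (m t - mf)).pow 2).add
      (((Real.continuous_sqrt.comp (squad_cont (S t))).sub
        (Real.continuous_sqrt.comp (squad_cont Sf))).pow 2)
  have hGcont : ∀ t ∈ Set.Ico (0:ℝ) T, Continuous (G t) := by
    intro t ht
    refine (continuous_const.mul ((sprj_cont (m t - mf)).pow 2)).add (Continuous.mul ?_ (squad_cont _))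
    refine continuous_const.sub ?_
    exact (Real.continuous_sqrt.comp (squad_cont Sf)).div
      (Real.continuous_sqrt.comp (squad_cont (S t)))
      (fun θ => (Real.sqrt_pos.mpr (hSt_pos t ht θ)).ne')
  -- pointwise derivative
  have hFd : ∀ t ∈ Set.Ico (0:ℝ) T, ∀ θ : Sph n,
      HasDerivWithinAt (fun t' => F t' θ) (G t θ) (Set.Ico (0:ℝ) T) t := by
    intro t ht θ
    have hv := hm t ht
    have hci : ∀ i : Fin n, HasDerivWithinAt (fun t' => m t' i)
        ((-(1 / ((n : ℝ) * (T - t))) • (m t - mf)) i) (Set.Ico (0:ℝ) T) t := by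
      intro i
      have h := (EuclideanSpace.proj (𝕜 := ℝ) i).hasFDerivAt.comp_hasDerivWithinAt t hv
      simpa [Function.comp_def] using h
    have ha : HasDerivWithinAt (fun t' => sprj θ (m t' - mf))
        (-(1 / ((n : ℝ) * (T - t))) * sprj θ (m t - mf)) (Set.Ico (0:ℝ) T) t := by
      have hsum : HasDerivWithinAt
          (fun t' => ∑ i, (θ : Eucl n) i * (m t' i - mf i))
          (∑ i, (θ : Eucl n) i * ((-(1 / ((n : ℝ) * (T - t))) • (m t - mf)) i))
          (Set.Ico (0:ℝ) T) t :=
        HasDerivWithinAt.fun_sum fun i _ => ((hci i).sub_const (mf i)).const_mul _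
      have hfun : (fun t' => sprj θ (m t' - mf))
          = fun t' => ∑ i, (θ : Eucl n) i * (m t' i - mf i) := by
        funext t'
        unfold sprj
        exact Finset.sum_congr rfl fun i _ => by
          simp [PiLp.sub_apply]
      have hval : (∑ i, (θ : Eucl n) i * ((-(1 / ((n : ℝ) * (T - t))) • (m t - mf)) i))
          = -(1 / ((n : ℝ) * (T - t))) * sprj θ (m t - mf) := by
        unfold sprj
        rw [Finset.mul_sum]
        exact Finset.sum_congr rfl fun i _ => by
          simp [PiLp.smul_apply, smul_eq_mul, PiLp.sub_apply]
          ring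
      rw [hfun, ← hval]
      exact hsum
    have ha2 : HasDerivWithinAt (fun t' => (sprj θ (m t' - mf)) ^ 2)
        (2 * sprj θ (m t - mf) * (-(1 / ((n : ℝ) * (T - t))) * sprj θ (m t - mf)))
        (Set.Ico (0:ℝ) T) t := by
      have := ha.fun_pow 2
      simpa using this
    have hq : HasDerivWithinAt (fun t' => squad (S t') θ)
        (squad (K t * S t + S t * (K t)ᵀ) θ) (Set.Ico (0:ℝ) T) t := by
      unfold squad
      exact HasDerivWithinAt.fun_sum fun i _ => HasDerivWithinAt.fun_sum fun j _ =>
        ((hS t ht i j).const_mul _).mul_const _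
    have hvpos := hSt_pos t ht θ
    have hs : HasDerivWithinAt (fun t' => Real.sqrt (squad (S t') θ))
        (squad (K t * S t + S t * (K t)ᵀ) θ / (2 * Real.sqrt (squad (S t) θ)))
        (Set.Ico (0:ℝ) T) t := by
      have hsq := Real.hasDerivAt_sqrt hvpos.ne'
      have := hsq.comp_hasDerivWithinAt t hq
      rw [one_div, inv_mul_eq_div] at this
      exact this
    have hs2 : HasDerivWithinAt
        (fun t' => (Real.sqrt (squad (S t') θ) - Real.sqrt (squad Sf θ)) ^ 2)
        (2 * (Real.sqrt (squad (S t) θ) - Real.sqrt (squad Sf θ)) *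
          (squad (K t * S t + S t * (K t)ᵀ) θ / (2 * Real.sqrt (squad (S t) θ))))
        (Set.Ico (0:ℝ) T) t := by
      have := (hs.sub_const (Real.sqrt (squad Sf θ))).fun_pow 2
      simpa using this
    have hsum := ha2.add hs2
    have hGval : G t θ = 2 * sprj θ (m t - mf) *
          (-(1 / ((n : ℝ) * (T - t))) * sprj θ (m t - mf))
        + 2 * (Real.sqrt (squad (S t) θ) - Real.sqrt (squad Sf θ)) *
          (squad (K t * S t + S t * (K t)ᵀ) θ / (2 * Real.sqrt (squad (S t) θ))) := by
      rw [hGdef]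
      have hsne : Real.sqrt (squad (S t) θ) ≠ 0 := (Real.sqrt_pos.mpr hvpos).ne'
      field_simp
    rw [hGval]
    exact hsum
  -- nonpositivity of ∫ G t
  have hGnonpos : ∀ t ∈ Set.Ico (0:ℝ) T, ∫ θ, G t θ ∂μ ≤ 0 := by
    intro t ht
    have hTt : 0 < T - t := sub_pos.2 ht.2
    set c := (1:ℝ)/(T - t) with hcdef
    have hc : 0 < c := one_div_pos.mpr hTt
    set Bf : Fin n → Fin n → ℝ := fun i j =>
      (if i = j then (1/(n:ℝ)) else 0) -
        ∫ θ, Real.sqrt (squad Sf θ / squad (S t) θ) *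
          ((θ : Eucl n) i * (θ : Eucl n) j) ∂μ with hBfdef
    have hBsymm : ∀ i j, Bf i j = Bf j i := by
      intro i j
      rw [hBfdef]
      simp only
      congr 1
      · by_cases h : i = j <;> simp [h, eq_comm]
      · exact integral_congr_ae (ae_of_all _ fun θ => by ring)
    have hKB : ∀ i j, K t i j = -c * Bf i j := by
      intro i j
      rw [hK t ht i j, hBfdef, hcdef]
      by_cases h : i = j <;> simp [h] <;> ring
    have hsdiv : ∀ θ : Sph n,
        Real.sqrt (squad Sf θ / squad (S t) θ)
          = Real.sqrt (squad Sf θ) / Real.sqrt (squad (S t) θ) :=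
      fun θ => Real.sqrt_div (hSf_pos θ).le _
    have hcontdiv : Continuous (fun θ : Sph n =>
        1 - Real.sqrt (squad Sf θ) / Real.sqrt (squad (S t) θ)) := by
      refine continuous_const.sub ?_
      exact (Real.continuous_sqrt.comp (squad_cont Sf)).div
        (Real.continuous_sqrt.comp (squad_cont (S t)))
        (fun θ => (Real.sqrt_pos.mpr (hSt_pos t ht θ)).ne')
    have hIB : ∀ i j, ∫ θ, (1 - Real.sqrt (squad Sf θ) / Real.sqrt (squad (S t) θ)) *
        ((θ : Eucl n) i * (θ : Eucl n) j) ∂μ = Bf i j := by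
      intro i j
      have h1 : Integrable (fun θ : Sph n => (θ : Eucl n) i * (θ : Eucl n) j) μ :=
        integrable_cont _ ((cont_coord i).mul (cont_coord j))
      have h2 : Integrable (fun θ : Sph n =>
          Real.sqrt (squad Sf θ / squad (S t) θ) * ((θ : Eucl n) i * (θ : Eucl n) j)) μ := by
        refine integrable_cont _ ?_
        refine Continuous.mul ?_ ((cont_coord i).mul (cont_coord j))
        exact Real.continuous_sqrt.comp ((squad_cont Sf).div (squad_cont (S t))
          (fun θ => (hSt_pos t ht θ).ne'))
      have heq : (fun θ : Sph n => (1 - Real.sqrt (squad Sf θ) / Real.sqrt (squad (S t) θ)) *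
          ((θ : Eucl n) i * (θ : Eucl n) j))
          = fun θ : Sph n => (θ : Eucl n) i * (θ : Eucl n) j -
            Real.sqrt (squad Sf θ / squad (S t) θ) * ((θ : Eucl n) i * (θ : Eucl n) j) := by
        funext θ
        rw [hsdiv θ]
        ring
      rw [heq, integral_sub h1 h2, moment hn i j, hBfdef]
    -- split the integral
    have hint1 : Integrable (fun θ : Sph n =>
        -(2/((n:ℝ)*(T - t))) * (sprj θ (m t - mf))^2) μ :=
      integrable_cont _ (continuous_const.mul ((sprj_cont (m t - mf)).pow 2))
    have hint2 : Integrable (fun θ : Sph n =>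
        (1 - Real.sqrt (squad Sf θ) / Real.sqrt (squad (S t) θ)) *
          squad (K t * S t + S t * (K t)ᵀ) θ) μ :=
      integrable_cont _ (hcontdiv.mul (squad_cont _))
    have hsplit : ∫ θ, G t θ ∂μ =
        (∫ θ, -(2/((n:ℝ)*(T - t))) * (sprj θ (m t - mf))^2 ∂μ) +
        ∫ θ, (1 - Real.sqrt (squad Sf θ) / Real.sqrt (squad (S t) θ)) *
          squad (K t * S t + S t * (K t)ᵀ) θ ∂μ := by
      rw [hGdef, ← integral_add hint1 hint2]
    rw [hsplit]
    have hterm1 : (∫ θ, -(2/((n:ℝ)*(T - t))) * (sprj θ (m t - mf))^2 ∂μ) ≤ 0 := by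
      rw [integral_const_mul]
      have h1 : 0 ≤ ∫ θ, (sprj θ (m t - mf))^2 ∂μ :=
        integral_nonneg fun θ => sq_nonneg _
      have h2 : -(2/((n:ℝ)*(T - t))) ≤ 0 := by
        have : 0 < 2/((n:ℝ)*(T - t)) := div_pos two_pos (mul_pos hnR hTt)
        linarith
      exact mul_nonpos_of_nonpos_of_nonneg h2 h1
    have hterm2 : (∫ θ, (1 - Real.sqrt (squad Sf θ) / Real.sqrt (squad (S t) θ)) *
        squad (K t * S t + S t * (K t)ᵀ) θ ∂μ) ≤ 0 := by
      -- expand squad as a double sum and integrate term by term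
      have hexp : (fun θ : Sph n => (1 - Real.sqrt (squad Sf θ) / Real.sqrt (squad (S t) θ)) *
          squad (K t * S t + S t * (K t)ᵀ) θ)
          = fun θ : Sph n => ∑ i, ∑ j, (K t * S t + S t * (K t)ᵀ) i j *
            ((1 - Real.sqrt (squad Sf θ) / Real.sqrt (squad (S t) θ)) *
              ((θ : Eucl n) i * (θ : Eucl n) j)) := by
        funext θ
        unfold squad
        rw [Finset.mul_sum]
        refine Finset.sum_congr rfl fun i _ => ?_
        rw [Finset.mul_sum]
        exact Finset.sum_congr rfl fun j _ => by ring
      rw [hexp]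
      have hintij : ∀ i j : Fin n, Integrable (fun θ : Sph n =>
          (K t * S t + S t * (K t)ᵀ) i j *
            ((1 - Real.sqrt (squad Sf θ) / Real.sqrt (squad (S t) θ)) *
              ((θ : Eucl n) i * (θ : Eucl n) j))) μ := by
        intro i j
        exact integrable_cont _ (continuous_const.mul
          (hcontdiv.mul ((cont_coord i).mul (cont_coord j))))
      rw [integral_finset_sum _ fun i _ => integrable_finset_sum _ fun j _ => hintij i j]
      have : ∀ i : Fin n, (∫ θ, ∑ j, (K t * S t + S t * (K t)ᵀ) i j *
          ((1 - Real.sqrt (squad Sf θ) / Real.sqrt (squad (S t) θ)) *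
            ((θ : Eucl n) i * (θ : Eucl n) j)) ∂μ)
          = ∑ j, (K t * S t + S t * (K t)ᵀ) i j * Bf i j := by
        intro i
        rw [integral_finset_sum _ fun j _ => hintij i j]
        refine Finset.sum_congr rfl fun j _ => ?_
        rw [integral_const_mul, hIB i j]
      rw [Finset.sum_congr rfl fun i _ => this i]
      -- now the finitary algebra
      have hQexp : ∀ i j, (K t * S t + S t * (K t)ᵀ) i j * Bf i j
          = -c * ((∑ k, Bf i k * S t k j * Bf i j) + (∑ k, S t i k * Bf j k * Bf i j)) := by
        intro i j
        rw [Matrix.add_apply, Matrix.mul_apply, Matrix.mul_apply]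
        simp only [Matrix.transpose_apply, hKB]
        rw [add_mul, Finset.sum_mul, Finset.sum_mul, mul_add, Finset.mul_sum, Finset.mul_sum]
        congr 1 <;> exact Finset.sum_congr rfl fun k _ => by ring
      rw [Finset.sum_congr rfl fun i _ => Finset.sum_congr rfl fun j _ => hQexp i j]
      have hP1 : (0:ℝ) ≤ ∑ i, ∑ j, ∑ k, Bf i k * S t k j * Bf i j := by
        refine Finset.sum_nonneg fun i _ => ?_
        rw [Finset.sum_comm]
        exact quad_nonneg (hpos t ht).posSemidef (fun k => Bf i k)
      have hP2 : (0:ℝ) ≤ ∑ i, ∑ j, ∑ k, S t i k * Bf j k * Bf i j := by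
        rw [Finset.sum_comm]
        refine Finset.sum_nonneg fun j _ => ?_
        have : ∑ i, ∑ k, S t i k * Bf j k * Bf i j
            = ∑ i, ∑ k, Bf i j * S t i k * Bf k j := by
          refine Finset.sum_congr rfl fun i _ => Finset.sum_congr rfl fun k _ => ?_
          rw [hBsymm j k]
          ring
        rw [this]
        exact quad_nonneg (hpos t ht).posSemidef (fun i => Bf i j)
      have hfinal : ∑ i, ∑ j, -c * ((∑ k, Bf i k * S t k j * Bf i j) +
            (∑ k, S t i k * Bf j k * Bf i j))
          = -c * ((∑ i, ∑ j, ∑ k, Bf i k * S t k j * Bf i j) +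
            (∑ i, ∑ j, ∑ k, S t i k * Bf j k * Bf i j)) := by
        simp only [mul_add, Finset.mul_sum, Finset.sum_add_distrib]
      rw [hfinal]
      have := add_nonneg hP1 hP2
      nlinarith
    linarith
  -- uniform bounds on compact subintervals
  have hbounds : ∀ a b : ℝ, 0 ≤ a → b < T →
      (∃ C, ∀ t ∈ Set.Icc a b, ∀ θ : Sph n, |G t θ| ≤ C) ∧
      (∃ C, ∀ t ∈ Set.Icc a b, ∀ θ : Sph n, |F t θ| ≤ C) := by
    intro a b ha hb
    by_cases hab : a ≤ b
    swap
    · rw [Set.Icc_eq_empty hab]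
      exact ⟨⟨0, fun t ht => absurd ht (Set.notMem_empty t)⟩,
             ⟨0, fun t ht => absurd ht (Set.notMem_empty t)⟩⟩
    have hJsub : Set.Icc a b ⊆ Set.Ico (0:ℝ) T :=
      fun x hx => ⟨le_trans ha hx.1, lt_of_le_of_lt hx.2 hb⟩
    have hmc : ContinuousOn m (Set.Ico (0:ℝ) T) :=
      fun t ht => (hm t ht).differentiableWithinAt.continuousWithinAt
    have hSc : ∀ i j : Fin n, ContinuousOn (fun t => S t i j) (Set.Ico (0:ℝ) T) :=
      fun i j t ht => (hS t ht i j).differentiableWithinAt.continuousWithinAt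
    -- bound on the mean
    obtain ⟨Cm0, hCm0⟩ := isCompact_Icc.exists_bound_of_continuousOn
      (((hmc.mono hJsub).sub continuousOn_const) : ContinuousOn (fun t => m t - mf) (Set.Icc a b))
    obtain ⟨Cm, hCmdef⟩ : ∃ x : ℝ, x = max Cm0 0 := ⟨_, rfl⟩
    have hCm : ∀ t ∈ Set.Icc a b, ‖m t - mf‖ ≤ Cm := by
      intro t ht
      rw [hCmdef]
      exact le_trans (hCm0 t ht) (le_max_left _ _)
    have hCm_nonneg : 0 ≤ Cm := by rw [hCmdef]; exact le_max_right _ _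
    -- bound on entries of S
    obtain ⟨CS0, hCS0⟩ := isCompact_Icc.exists_bound_of_continuousOn
      ((continuousOn_finset_sum Finset.univ fun i _ => continuousOn_finset_sum Finset.univ
        fun j _ => ((hSc i j).mono hJsub).abs) :
        ContinuousOn (fun t => ∑ i, ∑ j, |S t i j|) (Set.Icc a b))
    obtain ⟨CS, hCSdef⟩ : ∃ x : ℝ, x = max CS0 0 := ⟨_, rfl⟩
    have hCS_sum : ∀ t ∈ Set.Icc a b, ∑ i, ∑ j, |S t i j| ≤ CS := by
      intro t ht
      have h := hCS0 t ht
      rw [Real.norm_eq_abs] at h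
      rw [hCSdef]
      exact le_trans (le_abs_self _) (le_trans h (le_max_left _ _))
    have hCS_nonneg : 0 ≤ CS := by rw [hCSdef]; exact le_max_right _ _
    have hCS_entry : ∀ t ∈ Set.Icc a b, ∀ i j, |S t i j| ≤ CS := by
      intro t ht i j
      refine le_trans ?_ (hCS_sum t ht)
      calc |S t i j| ≤ ∑ j', |S t i j'| :=
            Finset.single_le_sum (f := fun j' => |S t i j'|)
              (fun k _ => abs_nonneg _) (Finset.mem_univ j)
        _ ≤ ∑ i', ∑ j', |S t i' j'| :=
            Finset.single_le_sum (f := fun i' => ∑ j', |S t i' j'|)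
              (fun k _ => Finset.sum_nonneg fun _ _ => abs_nonneg _) (Finset.mem_univ i)
    -- bound on squad Sf
    obtain ⟨CSf, hCSfdef⟩ : ∃ x : ℝ, x = ∑ i, ∑ j, |Sf i j| := ⟨_, rfl⟩
    have hCSf : ∀ θ : Sph n, squad Sf θ ≤ CSf := by
      intro θ
      rw [hCSfdef]
      exact le_trans (le_abs_self _) (abs_squad_le Sf θ)
    have hCSf_nonneg : 0 ≤ CSf := by
      rw [hCSfdef]
      exact Finset.sum_nonneg fun _ _ => Finset.sum_nonneg fun _ _ => abs_nonneg _
    -- bound squad (S t) θ from above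
    have hSquadUb : ∀ t ∈ Set.Icc a b, ∀ θ : Sph n, squad (S t) θ ≤ CS := by
      intro t ht θ
      refine le_trans (le_trans (le_abs_self _) (abs_squad_le _ θ)) ?_
      refine le_trans (Finset.sum_le_sum fun i _ => Finset.sum_le_sum fun j _ => le_refl _) ?_
      exact hCS_sum t ht
    -- lower bound ε₀ on squad (S t) θ
    have hnontriv : Nonempty (Sph n) := by
      refine ⟨⟨EuclideanSpace.single ⟨0, hn⟩ (1:ℝ), ?_⟩⟩
      simp [mem_sphere_zero_iff_norm, EuclideanSpace.norm_single]
    obtain ⟨θ₀⟩ := hnontriv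
    have hcpt : IsCompact (Set.Icc a b ×ˢ (Set.univ : Set (Sph n))) :=
      isCompact_Icc.prod isCompact_univ
    have hne : (Set.Icc a b ×ˢ (Set.univ : Set (Sph n))).Nonempty :=
      ⟨(a, θ₀), ⟨Set.left_mem_Icc.2 hab, Set.mem_univ _⟩⟩
    have hcontprod : ContinuousOn (fun p : ℝ × Sph n => squad (S p.1) p.2)
        (Set.Icc a b ×ˢ (Set.univ : Set (Sph n))) := by
      unfold squad
      refine continuousOn_finset_sum Finset.univ fun i _ =>
        continuousOn_finset_sum Finset.univ fun j _ => ?_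
      have h1 : ContinuousOn (fun p : ℝ × Sph n => S p.1 i j)
          (Set.Icc a b ×ˢ (Set.univ : Set (Sph n))) := by
        refine ContinuousOn.comp ((hSc i j).mono hJsub) continuous_fst.continuousOn ?_
        exact fun p hp => hp.1
      exact (((cont_coord i).comp continuous_snd).continuousOn.mul h1).mul
        ((cont_coord j).comp continuous_snd).continuousOn
    obtain ⟨p₀, hp₀, hminp⟩ := hcpt.exists_isMinOn hne hcontprod
    obtain ⟨ε₀, hε₀def⟩ : ∃ x : ℝ, x = squad (S p₀.1) p₀.2 := ⟨_, rfl⟩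
    have hε₀pos : 0 < ε₀ := by
      rw [hε₀def]; exact hSt_pos p₀.1 (hJsub hp₀.1) p₀.2
    have hε₀le : ∀ t ∈ Set.Icc a b, ∀ θ : Sph n, ε₀ ≤ squad (S t) θ := by
      intro t ht θ
      rw [hε₀def]
      exact isMinOn_iff.mp hminp (t, θ) ⟨ht, Set.mem_univ _⟩
    -- bound on K entries
    have hTb : 0 < T - b := sub_pos.2 hb
    obtain ⟨CK, hCKdef⟩ : ∃ x : ℝ, x = (1/(T - b)) * (Real.sqrt (CSf/ε₀) + 1) := ⟨_, rfl⟩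
    have hCK : ∀ t ∈ Set.Icc a b, ∀ i j, |K t i j| ≤ CK := by
      intro t ht i j
      have hTt : 0 < T - t := sub_pos.2 (lt_of_le_of_lt ht.2 hb)
      rw [hK t (hJsub ht) i j, abs_mul]
      have h1 : |1/(T - t)| ≤ 1/(T - b) := by
        rw [abs_of_pos (one_div_pos.mpr hTt)]
        exact one_div_le_one_div_of_le hTb (by linarith [ht.2])
      have h2 : |(∫ θ, Real.sqrt (squad Sf θ / squad (S t) θ) *
            ((θ : Eucl n) i * (θ : Eucl n) j) ∂μ)
          - (1/(n:ℝ)) * (if i = j then 1 else 0)| ≤ Real.sqrt (CSf/ε₀) + 1 := by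
        refine le_trans (abs_sub _ _) ?_
        have hInt : |∫ θ, Real.sqrt (squad Sf θ / squad (S t) θ) *
            ((θ : Eucl n) i * (θ : Eucl n) j) ∂μ| ≤ Real.sqrt (CSf/ε₀) := by
          rw [← Real.norm_eq_abs]
          have := norm_integral_le_of_norm_le_const (μ := μ)
            (C := Real.sqrt (CSf/ε₀))
            (f := fun θ : Sph n => Real.sqrt (squad Sf θ / squad (S t) θ) *
              ((θ : Eucl n) i * (θ : Eucl n) j)) ?_
          · simpa [measure_univ] using this
          · refine ae_of_all _ fun θ => ?_
            rw [Real.norm_eq_abs, abs_mul, abs_of_nonneg (Real.sqrt_nonneg _)]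
            have hb1 : Real.sqrt (squad Sf θ / squad (S t) θ) ≤ Real.sqrt (CSf/ε₀) := by
              refine Real.sqrt_le_sqrt ?_
              exact div_le_div₀ hCSf_nonneg (hCSf θ) hε₀pos (hε₀le t ht θ)
            have hb2 : |(θ : Eucl n) i * (θ : Eucl n) j| ≤ 1 := by
              rw [abs_mul]
              have := abs_coord_le θ i
              have := abs_coord_le θ j
              nlinarith [abs_nonneg ((θ : Eucl n) i), abs_nonneg ((θ : Eucl n) j)]
            calc Real.sqrt (squad Sf θ / squad (S t) θ) * |(θ : Eucl n) i * (θ : Eucl n) j|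
                ≤ Real.sqrt (CSf/ε₀) * 1 :=
                  mul_le_mul hb1 hb2 (abs_nonneg _) (Real.sqrt_nonneg _)
              _ = Real.sqrt (CSf/ε₀) := mul_one _
        have hδ : |(1/(n:ℝ)) * (if i = j then 1 else 0)| ≤ 1 := by
          have h1n : (1:ℝ) ≤ (n:ℝ) := by exact_mod_cast hn
          by_cases h : i = j
          · rw [if_pos h, mul_one, abs_of_nonneg (by positivity)]
            exact (div_le_one hnR).mpr h1n
          · rw [if_neg h, mul_zero, abs_zero]
            norm_num
        linarith
      refine le_trans (mul_le_mul h1 h2 (abs_nonneg _) (by positivity))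
        (le_of_eq hCKdef.symm)
    have hCK_nonneg : 0 ≤ CK := by
      rw [hCKdef]
      exact le_of_lt (mul_pos (one_div_pos.mpr hTb) (by positivity))
    -- bound on squad Q
    obtain ⟨CQ, hCQdef⟩ : ∃ x : ℝ, x = (n:ℝ)^2 * (2 * n * CK * CS) := ⟨_, rfl⟩
    have hQb : ∀ t ∈ Set.Icc a b, ∀ θ : Sph n,
        |squad (K t * S t + S t * (K t)ᵀ) θ| ≤ CQ := by
      intro t ht θ
      refine le_trans (abs_squad_le _ θ) ?_
      have hentry : ∀ i j, |(K t * S t + S t * (K t)ᵀ) i j| ≤ 2 * n * CK * CS := by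
        intro i j
        rw [Matrix.add_apply, Matrix.mul_apply, Matrix.mul_apply]
        simp only [Matrix.transpose_apply]
        refine le_trans (abs_add_le _ _) ?_
        have e1 : |∑ k, K t i k * S t k j| ≤ (n:ℝ) * CK * CS := by
          refine le_trans (Finset.abs_sum_le_sum_abs _ _) ?_
          have : ∀ k : Fin n, |K t i k * S t k j| ≤ CK * CS := by
            intro k
            rw [abs_mul]
            exact mul_le_mul (hCK t ht i k) (hCS_entry t ht k j) (abs_nonneg _) hCK_nonneg
          refine le_trans (Finset.sum_le_sum fun k _ => this k) ?_
          rw [Finset.sum_const, Finset.card_univ, Fintype.card_fin, nsmul_eq_mul]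
          exact le_of_eq (by ring)
        have e2 : |∑ k, S t i k * K t j k| ≤ (n:ℝ) * CK * CS := by
          refine le_trans (Finset.abs_sum_le_sum_abs _ _) ?_
          have : ∀ k : Fin n, |S t i k * K t j k| ≤ CK * CS := by
            intro k
            rw [abs_mul, mul_comm (|S t i k|)]
            exact mul_le_mul (hCK t ht j k) (hCS_entry t ht i k) (abs_nonneg _) hCK_nonneg
          refine le_trans (Finset.sum_le_sum fun k _ => this k) ?_
          rw [Finset.sum_const, Finset.card_univ, Fintype.card_fin, nsmul_eq_mul]
          exact le_of_eq (by ring)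
        linarith
      refine le_trans (Finset.sum_le_sum fun i _ => Finset.sum_le_sum fun j _ => hentry i j) ?_
      rw [Finset.sum_const, Finset.sum_const, Finset.card_univ, Fintype.card_fin,
        nsmul_eq_mul, nsmul_eq_mul]
      exact le_of_eq (by rw [hCQdef]; ring)
    constructor
    · -- bound for G
      refine ⟨(2/((n:ℝ)*(T - b))) * Cm^2 + (1 + Real.sqrt CSf / Real.sqrt ε₀) * CQ, ?_⟩
      intro t ht θ
      have hTt : 0 < T - t := sub_pos.2 (lt_of_le_of_lt ht.2 hb)
      rw [hGdef]
      refine le_trans (abs_add_le _ _) ?_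
      have hg1 : |(-(2/((n:ℝ)*(T - t)))) * (sprj θ (m t - mf))^2|
          ≤ (2/((n:ℝ)*(T - b))) * Cm^2 := by
        rw [abs_mul, abs_neg, abs_of_pos (div_pos two_pos (mul_pos hnR hTt))]
        have h1 : 2/((n:ℝ)*(T - t)) ≤ 2/((n:ℝ)*(T - b)) := by
          apply div_le_div_of_nonneg_left (by norm_num) (mul_pos hnR hTb)
          have : T - b ≤ T - t := by linarith [ht.2]
          nlinarith
        have h2 : |(sprj θ (m t - mf))^2| ≤ Cm^2 := by
          rw [abs_of_nonneg (sq_nonneg _), ← sq_abs]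
          exact pow_le_pow_left₀ (abs_nonneg _)
            (le_trans (abs_sprj_le θ _) (hCm t ht)) 2
        exact mul_le_mul h1 h2 (abs_nonneg _)
          (le_of_lt (div_pos two_pos (mul_pos hnR hTb)))
      have hg2 : |(1 - Real.sqrt (squad Sf θ) / Real.sqrt (squad (S t) θ)) *
            squad (K t * S t + S t * (K t)ᵀ) θ|
          ≤ (1 + Real.sqrt CSf / Real.sqrt ε₀) * CQ := by
        rw [abs_mul]
        have hs_pos : 0 < Real.sqrt (squad (S t) θ) :=
          Real.sqrt_pos.mpr (hSt_pos t (hJsub ht) θ)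
        have hr : Real.sqrt (squad Sf θ) / Real.sqrt (squad (S t) θ)
            ≤ Real.sqrt CSf / Real.sqrt ε₀ := by
          refine div_le_div₀ (Real.sqrt_nonneg _)
            (Real.sqrt_le_sqrt (hCSf θ)) (Real.sqrt_pos.mpr hε₀pos)
            (Real.sqrt_le_sqrt (hε₀le t ht θ))
        have hrnn : 0 ≤ Real.sqrt (squad Sf θ) / Real.sqrt (squad (S t) θ) := by positivity
        have h1 : |1 - Real.sqrt (squad Sf θ) / Real.sqrt (squad (S t) θ)|
            ≤ 1 + Real.sqrt CSf / Real.sqrt ε₀ := by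
          rw [abs_sub_comm]
          refine le_trans (abs_sub _ _) ?_
          rw [abs_of_nonneg hrnn, abs_one]
          linarith
        have hCQ_nonneg : 0 ≤ CQ := by
          rw [hCQdef]
          exact mul_nonneg (by positivity)
            (mul_nonneg (mul_nonneg (by positivity) hCK_nonneg) hCS_nonneg)
        exact mul_le_mul h1 (hQb t ht θ) (abs_nonneg _) (by positivity)
      linarith
    · -- bound for F
      refine ⟨Cm^2 + (Real.sqrt CS + Real.sqrt CSf)^2, ?_⟩
      intro t ht θ
      rw [hFdef]
      have hFnn : (0:ℝ) ≤ (sprj θ (m t - mf))^2 +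
          (Real.sqrt (squad (S t) θ) - Real.sqrt (squad Sf θ))^2 := by positivity
      rw [abs_of_nonneg hFnn]
      have h1 : (sprj θ (m t - mf))^2 ≤ Cm^2 := by
        rw [← sq_abs]
        exact pow_le_pow_left₀ (abs_nonneg _)
          (le_trans (abs_sprj_le θ _) (hCm t ht)) 2
      have h2 : (Real.sqrt (squad (S t) θ) - Real.sqrt (squad Sf θ))^2
          ≤ (Real.sqrt CS + Real.sqrt CSf)^2 := by
        have hs1 : Real.sqrt (squad (S t) θ) ≤ Real.sqrt CS :=
          Real.sqrt_le_sqrt (hSquadUb t ht θ)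
        have hs2 : Real.sqrt (squad Sf θ) ≤ Real.sqrt CSf :=
          Real.sqrt_le_sqrt (hCSf θ)
        rw [← sq_abs]
        refine pow_le_pow_left₀ (abs_nonneg _) ?_ 2
        refine le_trans (abs_sub _ _) ?_
        rw [abs_of_nonneg (Real.sqrt_nonneg _), abs_of_nonneg (Real.sqrt_nonneg _)]
        exact add_le_add hs1 hs2
      linarith
  -- derivative of the integral at interior points
  have hderiv : ∀ t₀ ∈ Set.Ioo (0:ℝ) T,
      HasDerivAt (fun t => ∫ θ, F t θ ∂μ) (∫ θ, G t₀ θ ∂μ) t₀ := by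
    intro t₀ ht₀
    set ε := min t₀ (T - t₀) / 2 with hεdef
    have hε : 0 < ε := by
      rw [hεdef]
      have h := lt_min ht₀.1 (sub_pos.mpr ht₀.2)
      linarith
    have hball : ball t₀ ε ⊆ Set.Icc (t₀ - ε) (t₀ + ε) := by
      intro x hx
      rw [mem_ball, Real.dist_eq, abs_lt] at hx
      constructor <;> linarith [hx.1, hx.2]
    have hsub : Set.Icc (t₀ - ε) (t₀ + ε) ⊆ Set.Ioo (0:ℝ) T := by
      intro x hx
      have h1 : ε ≤ t₀ / 2 := by
        rw [hεdef]; have := min_le_left t₀ (T - t₀); linarith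
      have h2 : ε ≤ (T - t₀) / 2 := by
        rw [hεdef]; have := min_le_right t₀ (T - t₀); linarith
      constructor
      · have := hx.1; have := ht₀.1; linarith
      · have := hx.2; have := ht₀.2; linarith
    obtain ⟨⟨CG, hCG⟩, -⟩ := hbounds (t₀ - ε) (t₀ + ε)
      (by have := (hsub (Set.left_mem_Icc.2 (by linarith))).1; linarith)
      (by have := (hsub (Set.right_mem_Icc.2 (by linarith))).2; linarith)
    have key := hasDerivAt_integral_of_dominated_loc_of_deriv_le (F := F)
      (F' := G) (μ := μ) (bound := fun _ => CG) (ball_mem_nhds t₀ hε)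
      (Filter.Eventually.of_forall fun t => (hFcont t).aestronglyMeasurable)
      (integrable_cont _ (hFcont t₀))
      ((hGcont t₀ (Set.mem_Ico.2 ⟨ht₀.1.le, ht₀.2⟩)).aestronglyMeasurable)
      (ae_of_all _ fun θ t ht => by
        simpa [Real.norm_eq_abs] using hCG t (hball ht) θ)
      (integrable_const _)
      (ae_of_all _ fun θ t ht => by
        have htmem : t ∈ Set.Ioo (0:ℝ) T := hsub (hball ht)
        have hIcoNhds : Set.Ico (0:ℝ) T ∈ 𝓝 t :=
          mem_nhds_iff.2 ⟨Set.Ioo 0 T, Set.Ioo_subset_Ico_self, isOpen_Ioo, htmem⟩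
        exact (hFd t (Set.Ioo_subset_Ico_self htmem) θ).hasDerivAt hIcoNhds)
    exact key.2
  -- continuity of the integral on [0, T)
  have hcont : ContinuousOn (fun t => ∫ θ, F t θ ∂μ) (Set.Ico (0:ℝ) T) := by
    intro t₀ ht₀
    obtain ⟨b, hb1, hb2⟩ := exists_between ht₀.2
    obtain ⟨-, ⟨CF, hCF⟩⟩ := hbounds 0 b le_rfl hb2
    refine continuousWithinAt_of_dominated (bound := fun _ => CF) ?_ ?_ (integrable_const _) ?_
    · exact Filter.Eventually.of_forall fun t => (hFcont t).aestronglyMeasurable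
    · have hev : ∀ᶠ t in nhdsWithin t₀ (Set.Ico (0:ℝ) T), t ∈ Set.Icc (0:ℝ) b := by
        have h1 : Set.Iio b ∈ nhdsWithin t₀ (Set.Ico (0:ℝ) T) :=
          nhdsWithin_le_nhds (Iio_mem_nhds hb1)
        have h2 : Set.Ico (0:ℝ) T ∈ nhdsWithin t₀ (Set.Ico (0:ℝ) T) := self_mem_nhdsWithin
        filter_upwards [h1, h2] with t hti htm
        exact ⟨htm.1, le_of_lt hti⟩
      filter_upwards [hev] with t htb
      exact ae_of_all _ fun θ => by
        simpa [Real.norm_eq_abs] using hCF t htb θ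
    · exact ae_of_all _ fun θ =>
        (hFd t₀ ht₀ θ).continuousWithinAt
  -- conclude
  have hinterior : interior (Set.Ico (0:ℝ) T) = Set.Ioo 0 T := interior_Ico
  refine antitoneOn_of_deriv_nonpos (convex_Ico 0 T) hcont ?_ ?_
  · rw [hinterior]
    intro t ht
    exact ((hderiv t ht).differentiableAt).differentiableWithinAt
  · rw [hinterior]
    intro t ht
    rw [(hderiv t ht).deriv]
    exact hGnonpos t (Set.Ioo_subset_Ico_self ht)
end
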